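/- arXiv:1109.3527 — 4 statements merged into one kernel-verified Lean document; each statement's English description precedes it below -/
import Mathlib

section
/- There exist absolute constants M_0 ∈ ℕ and C > 0 such that for every integer M ≥ M_0 and every real number N ≥ M², there exists a map κ = (κ_r, κ_θ) : 𝒥 → 𝒥̃ with the following two properties: (a) every element of 𝒥̃ has either exactly two preimages under κ or none; (b) for every (j_1,j_2) ∈ 𝒥, the difference set {k_1 − k_2 : k_1 ∈ D_{j_1}, k_2 ∈ D_{j_2}} is contained in the union of the sets D̃_{j_r,j_θ} over all (j_r,j_θ) ∈ 𝒥̃ satisfying |κ_r(j_1,j_2) − j_r| ≤ C and d[κ_θ(j_1,j_2), j_θ] ≤ C. (Orthogonality lemma, Lemma 3.8.) -/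
noncomputable section

/-- The mod-`M` distance `d[j,j'] = min{|j−j'|, M−|j−j'|}`. -/
def dmod (M : ℕ) (j j' : ℤ) : ℤ := min |j - j'| ((M : ℤ) - |j - j'|)

/-- The annular sector `D_j` of the annulus `N ≤ r ≤ N+10` with angular
aperture `[2π(j−1)/M, 2π(j+1)/M]`. -/
def Dsector (M : ℕ) (N : ℝ) (j : ℤ) : Set (ℝ × ℝ) :=
  {p | ∃ r θ : ℝ, N ≤ r ∧ r ≤ N + 10 ∧
    2 * Real.pi * ((j : ℝ) - 1) / M ≤ θ ∧ θ ≤ 2 * Real.pi * ((j : ℝ) + 1) / M ∧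
    p = (r * Real.cos θ, r * Real.sin θ)}

/-- The target sector `D̃_{j_r, j_θ}`. -/
def Dtarget (M : ℕ) (N : ℝ) (q : ℤ × ℤ) : Set (ℝ × ℝ) :=
  {p | ∃ r θ : ℝ,
    2 * N * Real.sin (Real.pi * ((q.1 : ℝ) - 1) / M) ≤ r ∧
    r ≤ 2 * N * Real.sin (Real.pi * ((q.1 : ℝ) + 1) / M) ∧
    2 * Real.pi * ((q.2 : ℝ) - 1) / M ≤ θ ∧ θ ≤ 2 * Real.pi * ((q.2 : ℝ) + 1) / M ∧
    p = (r * Real.cos θ, r * Real.sin θ)}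

/-- The index set `𝒥` of pairs `(j₁, j₂)` in `{0,…,M−1}²` with
`M/4 − 2 ≤ d[j₁,j₂] ≤ M/2 − 100`. -/
def Jset (M : ℕ) : Set (ℤ × ℤ) :=
  {p | 0 ≤ p.1 ∧ p.1 ≤ (M : ℤ) - 1 ∧ 0 ≤ p.2 ∧ p.2 ≤ (M : ℤ) - 1 ∧
    (M : ℝ) / 4 - 2 ≤ (dmod M p.1 p.2 : ℝ) ∧ (dmod M p.1 p.2 : ℝ) ≤ (M : ℝ) / 2 - 100}

/-- The index set `𝒥̃` of pairs `(j_r, j_θ)` with `1 ≤ j_r ≤ M/2 − 1` and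
`j_θ ∈ {0,…,M−1}`. -/
def Jtset (M : ℕ) : Set (ℤ × ℤ) :=
  {q | 1 ≤ q.1 ∧ (q.1 : ℝ) ≤ (M : ℝ) / 2 - 1 ∧ 0 ≤ q.2 ∧ q.2 ≤ (M : ℤ) - 1}

open Real Complex


lemma sin_mono {a b : ℝ} (ha : 0 ≤ a) (hab : a ≤ b) (hb : b ≤ π/2) : Real.sin a ≤ Real.sin b := by
  rcases eq_or_lt_of_le hab with h | h
  · rw [h]
  · exact le_of_lt (Real.strictMonoOn_sin ⟨by linarith [Real.pi_pos], by linarith⟩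
      ⟨by linarith [Real.pi_pos], hb⟩ h)

lemma mul_exp_re (z : ℂ) (a : ℝ) :
    (z * Complex.exp ((a:ℂ) * I)).re = z.re * Real.cos a - z.im * Real.sin a := by
  rw [Complex.mul_re, Complex.exp_ofReal_mul_I_re, Complex.exp_ofReal_mul_I_im]

lemma mul_exp_im (z : ℂ) (a : ℝ) :
    (z * Complex.exp ((a:ℂ) * I)).im = z.re * Real.sin a + z.im * Real.cos a := by
  rw [Complex.mul_im, Complex.exp_ofReal_mul_I_re, Complex.exp_ofReal_mul_I_im]

lemma w_re (x y τ : ℝ) :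
    (((x:ℂ) + y * I) * Complex.exp (((-τ : ℝ):ℂ) * I)).re = x * Real.cos τ + y * Real.sin τ := by
  rw [mul_exp_re]
  simp [Real.cos_neg, Real.sin_neg]

lemma w_im (x y τ : ℝ) :
    (((x:ℂ) + y * I) * Complex.exp (((-τ : ℝ):ℂ) * I)).im = y * Real.cos τ - x * Real.sin τ := by
  rw [mul_exp_im]
  simp [Real.cos_neg, Real.sin_neg]
  ring

lemma polar_decomp (x y τ : ℝ)
    (hw : ((x:ℂ) + y * I) * Complex.exp (((-τ : ℝ):ℂ) * I) ≠ 0) :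
    x = ‖((x:ℂ) + y * I) * Complex.exp (((-τ : ℝ):ℂ) * I)‖ *
        Real.cos (τ + (((x:ℂ) + y * I) * Complex.exp (((-τ : ℝ):ℂ) * I)).arg) ∧
    y = ‖((x:ℂ) + y * I) * Complex.exp (((-τ : ℝ):ℂ) * I)‖ *
        Real.sin (τ + (((x:ℂ) + y * I) * Complex.exp (((-τ : ℝ):ℂ) * I)).arg) := by
  set z : ℂ := (x:ℂ) + y * I with hz
  set w : ℂ := z * Complex.exp (((-τ : ℝ):ℂ) * I) with hwdef
  set R : ℝ := ‖w‖ with hR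
  have h1 : (R : ℂ) * Complex.exp ((w.arg : ℂ) * I) = w := Complex.norm_mul_exp_arg_mul_I w
  have h2 : z = (R:ℂ) * Complex.exp (((τ + w.arg : ℝ)  :ℂ) * I) := by
    calc z = w * Complex.exp ((τ:ℂ) * I) := by
              rw [hwdef, mul_assoc, ← Complex.exp_add]
              push_cast
              ring_nf
              simp
      _ = ((R:ℂ) * Complex.exp ((w.arg : ℂ) * I)) * Complex.exp ((τ:ℂ) * I) := by rw [h1]
      _ = (R:ℂ) * Complex.exp (((τ + w.arg : ℝ) :ℂ) * I) := by
              rw [mul_assoc, ← Complex.exp_add]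
              push_cast
              ring_nf
  have hre := congrArg Complex.re h2
  have him := congrArg Complex.im h2
  have hzre : z.re = x := by simp [hz]
  have hzim : z.im = y := by simp [hz]
  constructor
  · rw [← hzre, hre, mul_exp_re]
    simp
  · rw [← hzim, him, mul_exp_im]
    simp

lemma arg_small {w : ℂ} (hre : 0 < w.re) (him : |w.im| ≤ 10) :
    |w.arg| ≤ 16 / w.re := by
  have habs : w.re ≤ ‖w‖ := Complex.re_le_norm w
  have habs0 : 0 < ‖w‖ := lt_of_lt_of_le hre habs
  have h1 : |w.arg| ≤ π/2 := Complex.abs_arg_le_pi_div_two_iff.2 (le_of_lt hre)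
  have h2 : 2/π * |w.arg| ≤ |Real.sin w.arg| := by
    rcases abs_cases w.arg with ⟨h,h'⟩|⟨h,h'⟩
    · rw [h]
      exact le_trans (Real.mul_le_sin h' (h ▸ h1)) (le_abs_self _)
    · rw [h]
      have := Real.mul_le_sin (x := -w.arg) (by linarith) (h ▸ h1)
      rw [Real.sin_neg] at this
      exact le_trans this (neg_le_abs _)
  have h3 : |Real.sin w.arg| = |w.im| / ‖w‖ := by
    rw [Complex.sin_arg, abs_div, abs_of_pos habs0]
  have hpi : 0 < π := Real.pi_pos
  have h4 : |Real.sin w.arg| ≤ 10 / w.re := by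
    rw [h3, div_le_div_iff₀ habs0 hre]
    nlinarith [abs_nonneg w.im]
  have key : |w.arg| = (π/2) * (2/π * |w.arg|) := by
    field_simp
  rw [key]
  calc (π/2) * (2/π * |w.arg|) ≤ (π/2) * (10 / w.re) := by
        apply mul_le_mul_of_nonneg_left (h2.trans h4) (by positivity)
    _ = π * 5 / w.re := by ring
    _ ≤ 16 / w.re := by
        have hpi315 : π < 3.15 := Real.pi_lt_d2
        rw [div_le_div_iff₀ hre hre]
        nlinarith


lemma sin_div_mono (M : ℕ) (hM0 : (0:ℝ) < M) :
    ∀ a c : ℝ, 0 ≤ a → a ≤ c → c ≤ (M:ℝ)/2 →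
      Real.sin (π*a/M) ≤ Real.sin (π*c/M) := by
  have hπ : 0 < π := Real.pi_pos
  intro a c ha hac hc
  apply sin_mono
  · exact div_nonneg (mul_nonneg hπ.le ha) hM0.le
  · gcongr
  · rw [div_le_iff₀ hM0]
    nlinarith

lemma re_id (σ δ r₁ r₂ b : ℝ) (hb : b = 1 ∨ b = -1) :
    (r₁ * Real.cos (σ+δ) - r₂ * Real.cos (σ-δ)) * Real.cos (σ + b*(π/2))
      + (r₁ * Real.sin (σ+δ) - r₂ * Real.sin (σ-δ)) * Real.sin (σ + b*(π/2))
      = (r₁+r₂) * (b * Real.sin δ) := by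
  rcases hb with hb1 | hb1 <;> rw [hb1]
  · rw [show σ + 1*(π/2) = σ + π/2 by ring, Real.cos_add_pi_div_two, Real.sin_add_pi_div_two]
    rw [Real.cos_add, Real.cos_sub, Real.sin_add, Real.sin_sub]
    linear_combination (r₁ + r₂) * Real.sin δ * (Real.sin_sq_add_cos_sq σ)
  · rw [show σ + (-1)*(π/2) = σ - π/2 by ring, Real.cos_sub_pi_div_two, Real.sin_sub_pi_div_two]
    rw [Real.cos_add, Real.cos_sub, Real.sin_add, Real.sin_sub]
    linear_combination (-(r₁:ℝ) - r₂) * Real.sin δ * (Real.sin_sq_add_cos_sq σ)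

lemma im_id (σ δ r₁ r₂ b : ℝ) (hb : b = 1 ∨ b = -1) :
    (r₁ * Real.sin (σ+δ) - r₂ * Real.sin (σ-δ)) * Real.cos (σ + b*(π/2))
      - (r₁ * Real.cos (σ+δ) - r₂ * Real.cos (σ-δ)) * Real.sin (σ + b*(π/2))
      = b * ((r₂ - r₁) * Real.cos δ) := by
  rcases hb with hb1 | hb1 <;> rw [hb1]
  · rw [show σ + 1*(π/2) = σ + π/2 by ring, Real.cos_add_pi_div_two, Real.sin_add_pi_div_two]
    rw [Real.cos_add, Real.cos_sub, Real.sin_add, Real.sin_sub]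
    linear_combination ((r₂:ℝ) - r₁) * Real.cos δ * (Real.sin_sq_add_cos_sq σ)
  · rw [show σ + (-1)*(π/2) = σ - π/2 by ring, Real.cos_sub_pi_div_two, Real.sin_sub_pi_div_two]
    rw [Real.cos_add, Real.cos_sub, Real.sin_add, Real.sin_sub]
    linear_combination (-(r₂:ℝ) + r₁) * Real.cos δ * (Real.sin_sq_add_cos_sq σ)


lemma basic_N (M : ℕ) (N : ℝ) (hM : 1000 ≤ M) (hN : (M:ℝ)^2 ≤ N) :
    (1000:ℝ) ≤ (M:ℝ) ∧ (0:ℝ) < M ∧ (10:ℝ)^6 ≤ N ∧ 0 < N ∧ 1000*(M:ℝ) ≤ N := by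
  have hMR : (1000:ℝ) ≤ (M:ℝ) := by exact_mod_cast hM
  have hM0 : (0:ℝ) < M := by linarith
  have h := mul_le_mul hMR hMR (by norm_num) (by linarith)
  have h2 := mul_le_mul_of_nonneg_right hMR hM0.le
  have hsq : (M:ℝ)*(M:ℝ) = (M:ℝ)^2 := by ring
  have e : (10:ℝ)^6 = 1000*1000 := by norm_num
  refine ⟨hMR, hM0, by rw [e]; linarith, by linarith, by linarith⟩

lemma gap_lemma (M : ℕ) (N : ℝ) (hM : 1000 ≤ M) (hN : (M:ℝ)^2 ≤ N) (d : ℤ)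
    (hdR1 : (M:ℝ)/4 - 2 ≤ (d:ℝ)) (hdR2 : (d:ℝ) ≤ (M:ℝ)/2 - 100) :
    2*N*Real.sin (π*((d:ℝ)+2)/M) + 21 ≤ 2*N*Real.sin (π*((d:ℝ)+3)/M) := by
  have hπ : 0 < π := Real.pi_pos
  obtain ⟨hMR, hM0, hN6, hNpos, hMN⟩ := basic_N M N hM hN
  have hdlow : (248:ℝ) ≤ (d:ℝ) := by linarith
  have hmono := sin_div_mono M hM0
  have hss := Real.sin_sub_sin (π*((d:ℝ)+3)/M) (π*((d:ℝ)+2)/M)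
  have e1 : (π*((d:ℝ)+3)/M - π*((d:ℝ)+2)/M)/2 = π/(2*M) := by field_simp; ring
  have e2 : (π*((d:ℝ)+3)/M + π*((d:ℝ)+2)/M)/2 = π*(2*(d:ℝ)+5)/(2*M) := by field_simp; ring
  rw [e1, e2] at hss
  have h3 : 1/(M:ℝ) ≤ Real.sin (π/(2*M)) := by
    have harg : π/(2*(M:ℝ)) ≤ π/2 := by
      rw [div_le_div_iff₀ (by positivity) (by norm_num : (0:ℝ) < 2)]
      nlinarith [mul_le_mul_of_nonneg_left hMR hπ.le]
    have h := Real.mul_le_sin (x := π/(2*M)) (by positivity) harg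
    have e : 2/π * (π/(2*(M:ℝ))) = 1/M := by field_simp
    linarith [e ▸ h]
  have h4 : (195:ℝ)/M ≤ Real.cos (π*(2*(d:ℝ)+5)/(2*M)) := by
    rw [← Real.sin_pi_div_two_sub]
    have e3 : π/2 - π*(2*(d:ℝ)+5)/(2*M) = π*(((M:ℝ) - 2*d - 5)/2)/M := by field_simp; ring
    rw [e3]
    have h5 : Real.sin (π*((195:ℝ)/2)/M) ≤ Real.sin (π*(((M:ℝ) - 2*d - 5)/2)/M) := by
      apply hmono
      · norm_num
      · linarith
      · linarith
    have h6 : (195:ℝ)/M ≤ Real.sin (π*((195:ℝ)/2)/M) := by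
      have harg2 : π*((195:ℝ)/2)/M ≤ π/2 := by
        rw [div_le_div_iff₀ hM0 (by norm_num : (0:ℝ) < 2)]
        nlinarith [mul_le_mul_of_nonneg_left hMR hπ.le]
      have h := Real.mul_le_sin (x := π*((195:ℝ)/2)/M) (by positivity) harg2
      have e : 2/π * (π*((195:ℝ)/2)/(M:ℝ)) = 195/M := by field_simp
      linarith [e ▸ h]
    linarith
  have hsin0 : 0 < Real.sin (π/(2*M)) := by
    have : (0:ℝ) < 1/M := by positivity
    linarith
  have hprod : (1/(M:ℝ)) * ((195:ℝ)/M) ≤ Real.sin (π/(2*M)) * Real.cos (π*(2*(d:ℝ)+5)/(2*M)) :=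
    mul_le_mul h3 h4 (by positivity) hsin0.le
  have h7 : 390 * ((1/(M:ℝ)) * (1/M)) ≤
      Real.sin (π*((d:ℝ)+3)/M) - Real.sin (π*((d:ℝ)+2)/M) := by
    have e : (1/(M:ℝ)) * ((195:ℝ)/M) = 195 * ((1/(M:ℝ)) * (1/M)) := by ring
    rw [e] at hprod
    linarith
  have h11 := mul_le_mul_of_nonneg_left h7 (by linarith : (0:ℝ) ≤ 2*N)
  have h9 : (M:ℝ)^2 * ((1/(M:ℝ))*(1/M)) ≤ N * ((1/(M:ℝ))*(1/M)) :=
    mul_le_mul_of_nonneg_right hN (by positivity)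
  have h10 : (M:ℝ)^2 * ((1/(M:ℝ))*(1/M)) = 1 := by field_simp
  have h12 : (780:ℝ) ≤ 2*N*(390 * ((1/(M:ℝ))*(1/M))) := by
    rw [h10] at h9
    linarith
  linarith [h11, h12]

set_option maxHeartbeats 1000000 in
lemma endgame (M : ℕ) (N : ℝ) (hM : 1000 ≤ M) (hN : (M:ℝ)^2 ≤ N)
    (d : ℤ) (σ δ r₁ r₂ b : ℝ) (hb : b = 1 ∨ b = -1)
    (hdR1 : (M:ℝ)/4 - 2 ≤ (d:ℝ)) (hdR2 : (d:ℝ) ≤ (M:ℝ)/2 - 100)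
    (hr₁ : N ≤ r₁) (hr₁' : r₁ ≤ N + 10) (hr₂ : N ≤ r₂) (hr₂' : r₂ ≤ N + 10)
    (hsin1 : Real.sin (π*((d:ℝ)-2)/M) ≤ b * Real.sin δ)
    (hsin2 : b * Real.sin δ ≤ Real.sin (π*((d:ℝ)+2)/M)) :
    ∃ q₁ : ℤ, ∃ R ψ : ℝ,
      (d-1 ≤ q₁ ∧ q₁ ≤ d+2) ∧
      2*N*Real.sin (π*((q₁:ℝ)-1)/M) ≤ R ∧ R ≤ 2*N*Real.sin (π*((q₁:ℝ)+1)/M) ∧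
      |ψ| ≤ 1/M ∧
      r₁ * Real.cos (σ+δ) - r₂ * Real.cos (σ-δ)
        = R * Real.cos (σ + b*(π/2) + ψ) ∧
      r₁ * Real.sin (σ+δ) - r₂ * Real.sin (σ-δ)
        = R * Real.sin (σ + b*(π/2) + ψ) := by
  have hπ : 0 < π := Real.pi_pos
  obtain ⟨hMR, hM0, hN6, hNpos, hMN⟩ := basic_N M N hM hN
  have hdlow : (248:ℝ) ≤ (d:ℝ) := by linarith
  have hmono := sin_div_mono M hM0
  set L := Real.sin (π*((d:ℝ)-2)/M) with hLdef
  set U := Real.sin (π*((d:ℝ)+2)/M) with hUdef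
  have hL : 1/2 ≤ L := by
    rw [hLdef]
    have h6 : Real.sin (π*((M:ℝ)/6)/M) ≤ Real.sin (π*((d:ℝ)-2)/M) := by
      apply hmono
      · linarith
      · linarith
      · linarith
    have e : π*((M:ℝ)/6)/M = π/6 := by field_simp
    rw [e, Real.sin_pi_div_six] at h6
    exact h6
  have hLU : L ≤ U := le_trans hsin1 hsin2
  have hU1 : U ≤ 1 := Real.sin_le_one _
  set τ : ℝ := σ + b*(π/2) with hτdef
  set x : ℝ := r₁ * Real.cos (σ+δ) - r₂ * Real.cos (σ-δ) with hx
  set y : ℝ := r₁ * Real.sin (σ+δ) - r₂ * Real.sin (σ-δ) with hy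
  obtain ⟨w, hwdef⟩ : ∃ w : ℂ, w = ((x:ℂ) + y * I) * Complex.exp (((-τ : ℝ):ℂ) * I) := ⟨_, rfl⟩
  have hwre : w.re = (r₁+r₂) * (b * Real.sin δ) := by
    rw [hwdef, w_re, hx, hy, hτdef]
    exact re_id σ δ r₁ r₂ b hb
  have hwim : w.im = b * ((r₂ - r₁) * Real.cos δ) := by
    rw [hwdef, w_im, hx, hy, hτdef]
    exact im_id σ δ r₁ r₂ b hb
  have hsinpos : 0 < b * Real.sin δ := lt_of_lt_of_le (by linarith) hsin1
  have hU0 : 0 < U := lt_of_lt_of_le hsinpos hsin2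
  have hrelb : 2*N*L ≤ w.re := by
    rw [hwre]
    have h1 : (2*N)*L ≤ (r₁+r₂)*L := mul_le_mul_of_nonneg_right (by linarith) (by linarith)
    have h2 : (r₁+r₂)*L ≤ (r₁+r₂) * (b * Real.sin δ) :=
      mul_le_mul_of_nonneg_left hsin1 (by linarith)
    linarith
  have hreub : w.re ≤ (2*N+20) * U := by
    rw [hwre]
    have h1 : (r₁+r₂) * (b * Real.sin δ) ≤ (r₁+r₂)*U :=
      mul_le_mul_of_nonneg_left hsin2 (by linarith)
    have h2 : (r₁+r₂)*U ≤ (2*N+20)*U := mul_le_mul_of_nonneg_right (by linarith) hU0.le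
    linarith
  have hNL : N ≤ 2*N*L := by
    have := mul_nonneg hNpos.le (by linarith : (0:ℝ) ≤ 2*L-1)
    nlinarith
  have hwreN : N ≤ w.re := by linarith
  have hre_pos : 0 < w.re := by linarith
  have him10 : |w.im| ≤ 10 := by
    rw [hwim, abs_mul, abs_mul]
    have hb1 : |b| = 1 := by rcases hb with h|h <;> rw [h] <;> simp
    have h2 : |r₂ - r₁| ≤ 10 := by rw [abs_le]; constructor <;> linarith
    have h3 : |Real.cos δ| ≤ 1 := Real.abs_cos_le_one δ
    rw [hb1, one_mul]
    calc |r₂ - r₁| * |Real.cos δ| ≤ 10 * 1 :=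
          mul_le_mul h2 h3 (abs_nonneg _) (by norm_num)
      _ = 10 := by norm_num
  have hw0 : w ≠ 0 := by
    intro h
    rw [h] at hre_pos
    simp at hre_pos
  obtain ⟨R, hRdef⟩ : ∃ R : ℝ, R = ‖w‖ := ⟨_, rfl⟩
  have hR0 : 0 ≤ R := hRdef ▸ norm_nonneg w
  have hRre : w.re ≤ R := hRdef ▸ Complex.re_le_norm w
  have hR2 : R^2 = w.re^2 + w.im^2 := by
    rw [hRdef, Complex.sq_norm, Complex.normSq_apply]; ring
  have hRlb : 2*N*L ≤ R := le_trans hrelb hRre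
  have hNR : N ≤ R := by linarith
  have hA : (10:ℝ)^6 ≤ (2*N+20)*U := by
    have h1 : (2*N+20)*(1/2) ≤ (2*N+20)*U :=
      mul_le_mul_of_nonneg_left (le_trans hL hLU) (by linarith)
    linarith
  have hRub : R ≤ (2*N+20)*U + 1 := by
    have him2 : w.im^2 ≤ 100 := by nlinarith [abs_nonneg w.im, _root_.sq_abs w.im]
    have hwre2 : w.re^2 ≤ ((2*N+20)*U)^2 := pow_le_pow_left₀ hre_pos.le hreub 2
    have h1 : R^2 ≤ ((2*N+20)*U)^2 + 100 := by linarith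
    nlinarith [h1, hA, hR0]
  have hRub2 : R ≤ 2*N*U + 21 := by linarith [hRub, hU1]
  have hgap : 2*N*U + 21 ≤ 2*N*Real.sin (π*((d:ℝ)+3)/M) := by
    rw [hUdef]
    exact gap_lemma M N hM hN d hdR1 hdR2
  obtain ⟨hpx, hpy⟩ := polar_decomp x y τ (by rw [← hwdef]; exact hw0)
  rw [← hwdef] at hpx hpy
  obtain ⟨ψ, hψdef⟩ : ∃ ψ : ℝ, ψ = w.arg := ⟨_, rfl⟩
  rw [← hRdef, ← hψdef] at hpx hpy
  have hψ : |ψ| ≤ 1/M := by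
    have h1 := hψdef ▸ arg_small hre_pos him10
    have h2 : 16 / w.re ≤ 1/M := by
      rw [div_le_div_iff₀ hre_pos hM0]
      linarith [hwreN, hMN, hM0.le]
    exact le_trans h1 h2
  have hsel : ∃ q₁ : ℤ, (d-1 ≤ q₁ ∧ q₁ ≤ d+2) ∧
      2*N*Real.sin (π*((q₁:ℝ)-1)/M) ≤ R ∧ R ≤ 2*N*Real.sin (π*((q₁:ℝ)+1)/M) := by
    rcases le_or_gt R (2*N*Real.sin (π*((d:ℝ))/M)) with h|h
    · refine ⟨d-1, ⟨le_refl _, by omega⟩, ?_, ?_⟩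
      · push_cast
        rw [show (d:ℝ)-1-1 = (d:ℝ)-2 by ring]
        exact hRlb
      · push_cast
        rw [show (d:ℝ)-1+1 = (d:ℝ) by ring]
        exact h
    · rcases le_or_gt R (2*N*Real.sin (π*((d:ℝ)+1)/M)) with h2|h2
      · refine ⟨d, ⟨by omega, by omega⟩, ?_, ?_⟩
        · have hs : Real.sin (π*((d:ℝ)-1)/M) ≤ Real.sin (π*((d:ℝ))/M) := by
            apply hmono
            · linarith
            · linarith
            · linarith
          have := mul_le_mul_of_nonneg_left hs (by linarith : (0:ℝ) ≤ 2*N)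
          push_cast
          linarith
        · push_cast
          exact h2
      · rcases le_or_gt R (2*N*U) with h3|h3
        · refine ⟨d+1, ⟨by omega, by omega⟩, ?_, ?_⟩
          · have hs : Real.sin (π*((d:ℝ))/M) ≤ Real.sin (π*((d:ℝ)+1)/M) := by
              apply hmono
              · linarith
              · linarith
              · linarith
            have := mul_le_mul_of_nonneg_left hs (by linarith : (0:ℝ) ≤ 2*N)
            push_cast
            rw [show (d:ℝ)+1-1 = (d:ℝ) by ring]
            linarith
          · push_cast
            rw [show (d:ℝ)+1+1 = (d:ℝ)+2 by ring]
            exact h3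
        · refine ⟨d+2, ⟨by omega, by omega⟩, ?_, ?_⟩
          · have hs : Real.sin (π*((d:ℝ)+1)/M) ≤ Real.sin (π*((d:ℝ)+2)/M) := by
              apply hmono
              · linarith
              · linarith
              · linarith
            have := mul_le_mul_of_nonneg_left hs (by linarith : (0:ℝ) ≤ 2*N)
            push_cast
            rw [show (d:ℝ)+2-1 = (d:ℝ)+1 by ring]
            linarith
          · push_cast
            rw [show (d:ℝ)+2+1 = (d:ℝ)+3 by ring]
            linarith
  obtain ⟨q₁, hq₁, hq₁l, hq₁u⟩ := hsel
  exact ⟨q₁, R, ψ, hq₁, hq₁l, hq₁u, hψ, hpx, hpy⟩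

lemma dmod_le_int (M : ℕ) (a b k : ℤ) (h : |a - b| ≤ (M:ℤ)) :
    dmod M a b ≤ |a - b - k * (M:ℤ)| := by
  unfold dmod
  rcases le_or_gt k (-1) with hk | hk
  · have h1 : k * (M:ℤ) ≤ -1 * M := by
      apply mul_le_mul_of_nonneg_right hk (by positivity)
    have : (M:ℤ) - |a-b| ≤ a - b - k*M := by
      rcases abs_cases (a-b) with ⟨h2,h3⟩|⟨h2,h3⟩ <;> linarith
    calc min |a-b| ((M:ℤ) - |a-b|) ≤ (M:ℤ) - |a-b| := min_le_right _ _
      _ ≤ a - b - k*M := this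
      _ ≤ |a - b - k*M| := le_abs_self _
  · rcases le_or_gt 1 k with hk' | hk'
    · have h1 : 1 * (M:ℤ) ≤ k * M := by
        apply mul_le_mul_of_nonneg_right hk' (by positivity)
      have : (M:ℤ) - |a-b| ≤ -(a - b - k*M) := by
        rcases abs_cases (a-b) with ⟨h2,h3⟩|⟨h2,h3⟩ <;> linarith
      calc min |a-b| ((M:ℤ) - |a-b|) ≤ (M:ℤ) - |a-b| := min_le_right _ _
        _ ≤ -(a - b - k*M) := this
        _ ≤ |a - b - k*M| := neg_le_abs _
    · have : k = 0 := by omega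
      subst this
      simpa using min_le_left _ _

lemma dmod_le_real (M : ℕ) (a b k : ℤ) (C : ℝ) (h : |a - b| ≤ (M:ℤ))
    (hC : |(a:ℝ) - b - k * M| ≤ C) : ((dmod M a b : ℤ) : ℝ) ≤ C := by
  have h1 := dmod_le_int M a b k h
  have h2 : ((|a - b - k * (M:ℤ)| : ℤ) : ℝ) = |(a:ℝ) - b - k * M| := by
    push_cast [Int.cast_abs]
    ring_nf
  calc ((dmod M a b : ℤ) : ℝ) ≤ ((|a - b - k * (M:ℤ)| : ℤ) : ℝ) := by exact_mod_cast h1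
    _ = |(a:ℝ) - b - k * M| := h2
    _ ≤ C := hC

lemma sin_shift (x : ℝ) (n : ℤ) : Real.sin (x - n*(2*Real.pi)) = Real.sin x := by simp

def kappa (M : ℕ) (p : ℤ × ℤ) : ℤ × ℤ :=
  if (p.1 - p.2) % (M:ℤ) = dmod M p.1 p.2
  then (dmod M p.1 p.2, (p.2 + (dmod M p.1 p.2 / 2 + (M:ℤ)/4)) % M)
  else (dmod M p.1 p.2, (p.2 - (dmod M p.1 p.2 / 2 + (M:ℤ)/4)) % M)

lemma kappa_fst (M : ℕ) (p : ℤ × ℤ) : (kappa M p).1 = dmod M p.1 p.2 := by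
  unfold kappa; split <;> rfl

lemma emod_add_left (a y M : ℤ) : (a % M + y) % M = (a + y) % M := by
  rw [Int.add_emod, Int.emod_emod_of_dvd _ dvd_rfl, ← Int.add_emod]

lemma emod_add_right (y a M : ℤ) : (y + a % M) % M = (y + a) % M := by
  rw [add_comm, emod_add_left, add_comm]

lemma emod_sub_left (a y M : ℤ) : (a % M - y) % M = (a - y) % M := by
  rw [Int.sub_emod, Int.emod_emod_of_dvd _ dvd_rfl, ← Int.sub_emod]

lemma emod_sub_shift (a M : ℤ) : (a - M) % M = a % M := by
  rw [Int.sub_emod, Int.emod_self, sub_zero, Int.emod_emod_of_dvd _ dvd_rfl]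

lemma emod_add_shift (a M : ℤ) : (a + M) % M = a % M := by
  rw [Int.add_emod, Int.emod_self, add_zero, Int.emod_emod_of_dvd _ dvd_rfl]

lemma eq_or_sub_of_emod (t q M : ℤ) (ht : -M < t) (ht' : t < M) (h : t % M = q) :
    t = q ∨ t = q - M := by
  rcases le_or_gt 0 t with h0 | h0
  · left; rw [← h, Int.emod_eq_of_lt h0 ht']
  · right
    have h2 : (t + M) % M = t % M := emod_add_shift t M
    have h3 : (t + M) % M = t + M := Int.emod_eq_of_lt (by omega) (by omega)
    omega

lemma maps_lemma (M : ℕ) (hM : 1000 ≤ M) (p : ℤ × ℤ) (hp : p ∈ Jset M) :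
    kappa M p ∈ Jtset M := by
  obtain ⟨h1, h2, h3, h4, h5, h6⟩ := hp
  have hMZ : (1000:ℤ) ≤ (M:ℤ) := by exact_mod_cast hM
  have hMR : (1000:ℝ) ≤ (M:ℝ) := by exact_mod_cast hM
  have hd1 : (M:ℤ) - 8 ≤ 4 * dmod M p.1 p.2 := by
    have : (M:ℝ) - 8 ≤ 4 * (dmod M p.1 p.2 : ℝ) := by linarith
    exact_mod_cast this
  have hd2 : 2 * dmod M p.1 p.2 ≤ (M:ℤ) - 200 := by
    have : 2 * ((dmod M p.1 p.2 : ℤ):ℝ) ≤ (M:ℝ) - 200 := by linarith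
    exact_mod_cast this
  have hsnd : ∃ t : ℤ, (kappa M p).2 = t % M := by
    unfold kappa; split
    · exact ⟨_, rfl⟩
    · exact ⟨_, rfl⟩
  obtain ⟨t, ht⟩ := hsnd
  have hMpos : (0:ℤ) < M := by omega
  have e0 : 0 ≤ t % (M:ℤ) := Int.emod_nonneg t (by omega)
  have e1 : t % (M:ℤ) < M := Int.emod_lt_of_pos t hMpos
  refine ⟨?_, ?_, ?_, ?_⟩
  · rw [kappa_fst]; omega
  · rw [kappa_fst]; linarith
  · rw [ht]; omega
  · rw [ht]; omega

set_option maxHeartbeats 1000000 in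
lemma fiber_lemma (M : ℕ) (hM : 1000 ≤ M) (q : ℤ × ℤ) (hq : q ∈ Jtset M)
    (hq1 : (M:ℝ)/4 - 2 ≤ (q.1:ℝ)) (hq2 : (q.1:ℝ) ≤ (M:ℝ)/2 - 100) :
    {p | p ∈ Jset M ∧ kappa M p = q}.ncard = 2 := by
  obtain ⟨hqa, hqb, hqc, hqd⟩ := hq
  have hMZ : (1000:ℤ) ≤ (M:ℤ) := by exact_mod_cast hM
  have hMpos : (0:ℤ) < M := by omega
  have hMne : ((M:ℤ)) ≠ 0 := by omega
  have hMR : (1000:ℝ) ≤ (M:ℝ) := by exact_mod_cast hM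
  have hq1z : (M:ℤ) - 8 ≤ 4 * q.1 := by
    have : (M:ℝ) - 8 ≤ 4*(q.1:ℝ) := by linarith
    exact_mod_cast this
  have hq2z : 2 * q.1 ≤ (M:ℤ) - 200 := by
    have : 2*(q.1:ℝ) ≤ (M:ℝ) - 200 := by linarith
    exact_mod_cast this
  set c : ℤ := q.1 / 2 + (M:ℤ)/4 with hc
  have hcb : (0:ℤ) < 2*c ∧ 2*c < M := by constructor <;> omega
  set A2 : ℤ := (q.2 - c) % M with hA2
  set A1 : ℤ := (A2 + q.1) % M with hA1
  set B2 : ℤ := (q.2 + c) % M with hB2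
  set B1 : ℤ := (B2 - q.1) % M with hB1
  have hA2b : 0 ≤ A2 ∧ A2 < M := ⟨Int.emod_nonneg _ hMne, Int.emod_lt_of_pos _ hMpos⟩
  have hA1b : 0 ≤ A1 ∧ A1 < M := ⟨Int.emod_nonneg _ hMne, Int.emod_lt_of_pos _ hMpos⟩
  have hB2b : 0 ≤ B2 ∧ B2 < M := ⟨Int.emod_nonneg _ hMne, Int.emod_lt_of_pos _ hMpos⟩
  have hB1b : 0 ≤ B1 ∧ B1 < M := ⟨Int.emod_nonneg _ hMne, Int.emod_lt_of_pos _ hMpos⟩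
  have hq1M : q.1 % (M:ℤ) = q.1 := Int.emod_eq_of_lt (by omega) (by omega)
  have hnq1M : (-q.1) % (M:ℤ) = M - q.1 := by
    have h1 : (-q.1 + M) % (M:ℤ) = (-q.1) % M := emod_add_shift _ _
    have h2 : (-q.1 + M) % (M:ℤ) = -q.1 + M := Int.emod_eq_of_lt (by omega) (by omega)
    omega
  -- key emod values
  have htA : (A1 - A2) % M = q.1 := by
    rw [hA1, emod_sub_left, add_sub_cancel_left, hq1M]
  have htB : (B1 - B2) % M = (M:ℤ) - q.1 := by
    rw [hB1, emod_sub_left, sub_sub_cancel_left, hnq1M]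
  have htA2 : A1 - A2 = q.1 ∨ A1 - A2 = q.1 - M :=
    eq_or_sub_of_emod _ _ _ (by omega) (by omega) htA
  have htB2 : B1 - B2 = M - q.1 ∨ B1 - B2 = -q.1 := by
    rcases eq_or_sub_of_emod _ _ _ (by omega) (by omega) htB with h | h
    · left; omega
    · right; omega
  have hdA : dmod M A1 A2 = q.1 := by
    unfold dmod
    rcases abs_cases (A1 - A2) with ⟨h,h'⟩|⟨h,h'⟩ <;> omega
  have hdB : dmod M B1 B2 = q.1 := by
    unfold dmod
    rcases abs_cases (B1 - B2) with ⟨h,h'⟩|⟨h,h'⟩ <;> omega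
  have hA2c : (A2 + c) % M = q.2 := by
    rw [hA2, emod_add_left, sub_add_cancel, Int.emod_eq_of_lt (by omega) (by omega)]
  have hB2c : (B2 - c) % M = q.2 := by
    rw [hB2, emod_sub_left, add_sub_cancel_right, Int.emod_eq_of_lt (by omega) (by omega)]
  -- membership of pA
  have hpAJ : ((A1, A2) : ℤ × ℤ) ∈ Jset M := by
    refine ⟨by omega, by omega, by omega, by omega, ?_, ?_⟩
    · show (M:ℝ)/4 - 2 ≤ ((dmod M A1 A2 : ℤ) : ℝ)
      rw [hdA]; exact hq1
    · show ((dmod M A1 A2 : ℤ) : ℝ) ≤ (M:ℝ)/2 - 100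
      rw [hdA]; exact hq2
  have hpBJ : ((B1, B2) : ℤ × ℤ) ∈ Jset M := by
    refine ⟨by omega, by omega, by omega, by omega, ?_, ?_⟩
    · show (M:ℝ)/4 - 2 ≤ ((dmod M B1 B2 : ℤ) : ℝ)
      rw [hdB]; exact hq1
    · show ((dmod M B1 B2 : ℤ) : ℝ) ≤ (M:ℝ)/2 - 100
      rw [hdB]; exact hq2
  have hkA : kappa M ((A1, A2) : ℤ × ℤ) = q := by
    unfold kappa
    rw [if_pos (by show (A1 - A2) % (M:ℤ) = dmod M A1 A2; rw [htA, hdA])]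
    show (dmod M A1 A2, (A2 + (dmod M A1 A2 / 2 + (M:ℤ)/4)) % M) = q
    rw [hdA, ← hc, hA2c]
  have hkB : kappa M ((B1, B2) : ℤ × ℤ) = q := by
    unfold kappa
    rw [if_neg (by show ¬ (B1 - B2) % (M:ℤ) = dmod M B1 B2; rw [htB, hdB]; omega)]
    show (dmod M B1 B2, (B2 - (dmod M B1 B2 / 2 + (M:ℤ)/4)) % M) = q
    rw [hdB, ← hc, hB2c]
  -- pA ≠ pB
  have hne : ((A1, A2) : ℤ × ℤ) ≠ (B1, B2) := by
    intro h
    have h2 : A2 = B2 := congrArg Prod.snd h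
    have e : B2 = (A2 + 2*c) % M := by
      rw [hA2, hB2, emod_add_left]
      congr 1
      ring
    rcases le_or_gt (A2 + 2*c) (M - 1) with h3 | h3
    · rw [Int.emod_eq_of_lt (by omega) (by omega)] at e
      omega
    · have e2 : (A2 + 2*c) % M = A2 + 2*c - M := by
        rw [← emod_sub_shift]
        exact Int.emod_eq_of_lt (by omega) (by omega)
      rw [e2] at e
      omega
  -- the fiber is exactly {pA, pB}
  have hset : {p | p ∈ Jset M ∧ kappa M p = q} = {((A1, A2) : ℤ × ℤ), (B1, B2)} := by
    ext p
    simp only [Set.mem_setOf_eq, Set.mem_insert_iff, Set.mem_singleton_iff]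
    constructor
    · rintro ⟨⟨h1, h2, h3, h4, h5, h6⟩, hkp⟩
      have hdp : dmod M p.1 p.2 = q.1 := by
        rw [← kappa_fst M p, hkp]
      have hd1 : (M:ℤ) - 8 ≤ 4 * dmod M p.1 p.2 := by rw [hdp]; omega
      have hd2 : 2 * dmod M p.1 p.2 ≤ (M:ℤ) - 200 := by rw [hdp]; omega
      have hcases : p.1 - p.2 = q.1 ∨ p.1 - p.2 = -q.1 ∨ p.1 - p.2 = M - q.1 ∨
          p.1 - p.2 = q.1 - M := by
        have := hdp
        unfold dmod at this
        rcases abs_cases (p.1 - p.2) with ⟨h,h'⟩|⟨h,h'⟩ <;> omega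
      by_cases hbr : (p.1 - p.2) % (M:ℤ) = dmod M p.1 p.2
      · left
        have hkp2 : (p.2 + c) % M = q.2 := by
          have : kappa M p = (dmod M p.1 p.2, (p.2 + (dmod M p.1 p.2 / 2 + (M:ℤ)/4)) % M) := by
            unfold kappa; rw [if_pos hbr]
          rw [this] at hkp
          have := congrArg Prod.snd hkp
          simpa [hdp, ← hc] using this
        have hp2 : p.2 = A2 := by
          rw [hA2, ← hkp2, emod_sub_left, add_sub_cancel_right,
            Int.emod_eq_of_lt (by omega) (by omega)]
        have hbr' : (p.1 - p.2) % (M:ℤ) = q.1 := by rw [hbr, hdp]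
        have hp1 : p.1 = A1 := by
          rw [hA1, ← hp2, ← hbr', emod_add_right]
          have e : p.2 + (p.1 - p.2) = p.1 := by ring
          rw [e, Int.emod_eq_of_lt (by omega) (by omega)]
        exact Prod.ext hp1 hp2
      · have hkp2 : (p.2 - c) % M = q.2 := by
          have h0 : kappa M p = (dmod M p.1 p.2, (p.2 - (dmod M p.1 p.2 / 2 + (M:ℤ)/4)) % M) := by
            unfold kappa; rw [if_neg hbr]
          rw [h0] at hkp
          have := congrArg Prod.snd hkp
          simpa [hdp, ← hc] using this
        have hp2 : p.2 = B2 := by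
          rw [hB2, ← hkp2, emod_add_left, sub_add_cancel,
            Int.emod_eq_of_lt (by omega) (by omega)]
        rcases hcases with h|h|h|h
        · exfalso; apply hbr; rw [h, hq1M, hdp]
        · have hp1 : p.1 = B1 := by
            rw [hB1, ← hp2]
            have e : p.2 - q.1 = p.1 := by omega
            rw [e, Int.emod_eq_of_lt (by omega) (by omega)]
          right; exact Prod.ext hp1 hp2
        · have hp1 : p.1 = B1 := by
            rw [hB1, ← hp2]
            have e : p.2 - q.1 = p.1 - M := by omega
            rw [e, emod_sub_shift, Int.emod_eq_of_lt (by omega) (by omega)]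
          right; exact Prod.ext hp1 hp2
        · exfalso; apply hbr; rw [h, emod_sub_shift, hq1M, hdp]
    · rintro (rfl | rfl)
      · exact ⟨hpAJ, hkA⟩
      · exact ⟨hpBJ, hkB⟩
  rw [hset]
  exact Set.ncard_pair hne

set_option maxHeartbeats 1000000 in
lemma main_case (M : ℕ) (N : ℝ) (hM : 1000 ≤ M) (hN : (M:ℝ)^2 ≤ N)
    (j₁ j₂ d a k : ℤ) (b θ₁ θ₂ r₁ r₂ : ℝ)
    (hb : b = 1 ∨ b = -1)
    (hdR1 : (M:ℝ)/4 - 2 ≤ (d:ℝ)) (hdR2 : (d:ℝ) ≤ (M:ℝ)/2 - 100)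
    (hθ₁l : 2*π*((j₁:ℝ)-1)/M ≤ θ₁) (hθ₁u : θ₁ ≤ 2*π*((j₁:ℝ)+1)/M)
    (hθ₂l : 2*π*((j₂:ℝ)-1)/M ≤ θ₂) (hθ₂u : θ₂ ≤ 2*π*((j₂:ℝ)+1)/M)
    (hr₁ : N ≤ r₁) (hr₁' : r₁ ≤ N + 10) (hr₂ : N ≤ r₂) (hr₂' : r₂ ≤ N + 10)
    (hsin1 : Real.sin (π*((d:ℝ)-2)/M) ≤ b * Real.sin ((θ₁-θ₂)/2))
    (hsin2 : b * Real.sin ((θ₁-θ₂)/2) ≤ Real.sin (π*((d:ℝ)+2)/M))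
    (ha : |(a:ℝ) - ((j₁:ℝ)+(j₂:ℝ))/2 - b*(M:ℝ)/4 - (k:ℝ)*M| ≤ 2) :
    ∃ q ∈ Jtset M, ((|d - q.1| : ℤ) : ℝ) ≤ 10 ∧ ((dmod M (a % (M:ℤ)) q.2 : ℤ) : ℝ) ≤ 10 ∧
      ((r₁*Real.cos θ₁ - r₂*Real.cos θ₂, r₁*Real.sin θ₁ - r₂*Real.sin θ₂) : ℝ×ℝ)
        ∈ Dtarget M N q := by
  have hπ : 0 < π := Real.pi_pos
  obtain ⟨hMR, hM0, hN6, hNpos, hMN⟩ := basic_N M N hM hN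
  have hdlow : (248:ℝ) ≤ (d:ℝ) := by linarith
  obtain ⟨σ, hσ⟩ : ∃ σ : ℝ, σ = (θ₁+θ₂)/2 := ⟨_, rfl⟩
  obtain ⟨δ, hδ⟩ : ∃ δ : ℝ, δ = (θ₁-θ₂)/2 := ⟨_, rfl⟩
  have e1 : σ + δ = θ₁ := by rw [hσ, hδ]; ring
  have e2 : σ - δ = θ₂ := by rw [hσ, hδ]; ring
  rw [← hδ] at hsin1 hsin2
  obtain ⟨q₁, R, ψ, ⟨hq₁l, hq₁u⟩, hRl, hRu, hψ, hpx, hpy⟩ :=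
    endgame M N hM hN d σ δ r₁ r₂ b hb hdR1 hdR2 hr₁ hr₁' hr₂ hr₂' hsin1 hsin2
  rw [e1, e2] at hpx hpy
  obtain ⟨Θ, hΘ⟩ : ∃ Θ : ℝ, Θ = σ + b*(π/2) + ψ := ⟨_, rfl⟩
  rw [← hΘ] at hpx hpy
  obtain ⟨m, hm⟩ : ∃ m : ℤ, m = ⌊Θ*(M:ℝ)/(2*π) + 1/2⌋ := ⟨_, rfl⟩
  obtain ⟨mdiv, hmdiv⟩ : ∃ v : ℤ, v = m / (M:ℤ) := ⟨_, rfl⟩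
  obtain ⟨q₂, hq₂⟩ : ∃ v : ℤ, v = m % (M:ℤ) := ⟨_, rfl⟩
  obtain ⟨θ, hθ⟩ : ∃ θ : ℝ, θ = Θ - (mdiv:ℝ)*(2*π) := ⟨_, rfl⟩
  have hMZ : (0:ℤ) < (M:ℤ) := by exact_mod_cast hM0
  have hq₂0 : 0 ≤ q₂ := hq₂ ▸ Int.emod_nonneg m (ne_of_gt hMZ)
  have hq₂M : q₂ < M := hq₂ ▸ Int.emod_lt_of_pos m hMZ
  -- floor bounds
  have hmb : |(m:ℝ) - Θ*(M:ℝ)/(2*π)| ≤ 1/2 := by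
    have h1 : (m:ℝ) ≤ Θ*(M:ℝ)/(2*π) + 1/2 := hm ▸ Int.floor_le _
    have h2 : Θ*(M:ℝ)/(2*π) + 1/2 < (m:ℝ) + 1 := hm ▸ Int.lt_floor_add_one _
    rw [abs_le]
    constructor <;> linarith
  -- σ bounds
  have hσl : π*((j₁:ℝ)+(j₂:ℝ)-2)/M ≤ σ := by
    have e : π*((j₁:ℝ)+(j₂:ℝ)-2)/M = (2*π*((j₁:ℝ)-1)/M + 2*π*((j₂:ℝ)-1)/M)/2 := by
      field_simp; ring
    rw [e, hσ]
    linarith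
  have hσu : σ ≤ π*((j₁:ℝ)+(j₂:ℝ)+2)/M := by
    have e : π*((j₁:ℝ)+(j₂:ℝ)+2)/M = (2*π*((j₁:ℝ)+1)/M + 2*π*((j₂:ℝ)+1)/M)/2 := by
      field_simp; ring
    rw [e, hσ]
    linarith
  have hσabs : |σ - π*((j₁:ℝ)+(j₂:ℝ))/M| ≤ 2*π/M := by
    have eplus : π*((j₁:ℝ)+(j₂:ℝ)+2)/M = π*((j₁:ℝ)+(j₂:ℝ))/M + 2*π/M := by
      field_simp
    have eminus : π*((j₁:ℝ)+(j₂:ℝ)-2)/M = π*((j₁:ℝ)+(j₂:ℝ))/M - 2*π/M := by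
      field_simp
    rw [abs_le]
    constructor <;> linarith [eplus ▸ hσu, eminus ▸ hσl]
  have hΘm : |Θ*(M:ℝ)/(2*π) - (((j₁:ℝ)+(j₂:ℝ))/2 + b*(M:ℝ)/4)| ≤ 2 := by
    have eΘ : Θ*(M:ℝ)/(2*π) - (((j₁:ℝ)+(j₂:ℝ))/2 + b*(M:ℝ)/4)
        = (σ - π*((j₁:ℝ)+(j₂:ℝ))/M)*((M:ℝ)/(2*π)) + ψ*((M:ℝ)/(2*π)) := by
      rw [hΘ]
      field_simp
      ring
    have h1 : |(σ - π*((j₁:ℝ)+(j₂:ℝ))/M)*((M:ℝ)/(2*π))| ≤ 1 := by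
      rw [abs_mul, abs_of_pos (by positivity : (0:ℝ) < (M:ℝ)/(2*π))]
      have e : (2*π/M)*((M:ℝ)/(2*π)) = 1 := by field_simp
      calc |σ - π*((j₁:ℝ)+(j₂:ℝ))/M| * ((M:ℝ)/(2*π))
          ≤ (2*π/M)*((M:ℝ)/(2*π)) :=
            mul_le_mul_of_nonneg_right hσabs (by positivity)
        _ = 1 := e
    have h2 : |ψ*((M:ℝ)/(2*π))| ≤ 1 := by
      rw [abs_mul, abs_of_pos (by positivity : (0:ℝ) < (M:ℝ)/(2*π))]
      have e : (1/(M:ℝ))*((M:ℝ)/(2*π)) = 1/(2*π) := by field_simp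
      have h3 : |ψ| * ((M:ℝ)/(2*π)) ≤ (1/(M:ℝ))*((M:ℝ)/(2*π)) :=
        mul_le_mul_of_nonneg_right hψ (by positivity)
      have h4 : 1/(2*π) ≤ 1 := by
        rw [div_le_one (by positivity)]
        linarith [Real.pi_gt_three]
      linarith [e ▸ h3]
    calc |Θ*(M:ℝ)/(2*π) - (((j₁:ℝ)+(j₂:ℝ))/2 + b*(M:ℝ)/4)|
        = |(σ - π*((j₁:ℝ)+(j₂:ℝ))/M)*((M:ℝ)/(2*π)) + ψ*((M:ℝ)/(2*π))| := by rw [eΘ]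
      _ ≤ |(σ - π*((j₁:ℝ)+(j₂:ℝ))/M)*((M:ℝ)/(2*π))| + |ψ*((M:ℝ)/(2*π))| := abs_add_le _ _
      _ ≤ 2 := by linarith
  have hma : |(a:ℝ) - (m:ℝ) - (k:ℝ)*M| ≤ 5 := by
    have e : (a:ℝ) - m - k*M = ((a:ℝ) - ((j₁:ℝ)+(j₂:ℝ))/2 - b*(M:ℝ)/4 - k*M)
        - ((m:ℝ) - Θ*(M:ℝ)/(2*π))
        - (Θ*(M:ℝ)/(2*π) - (((j₁:ℝ)+(j₂:ℝ))/2 + b*(M:ℝ)/4)) := by ring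
    rw [e]
    calc |_| ≤ |(a:ℝ) - ((j₁:ℝ)+(j₂:ℝ))/2 - b*(M:ℝ)/4 - k*M|
          + |(m:ℝ) - Θ*(M:ℝ)/(2*π)| + |Θ*(M:ℝ)/(2*π) - (((j₁:ℝ)+(j₂:ℝ))/2 + b*(M:ℝ)/4)| := by
            exact (abs_sub _ _).trans (by gcongr; exact abs_sub _ _)
      _ ≤ 5 := by linarith
  -- index bounds
  have hd248 : (248:ℤ) ≤ d := by exact_mod_cast hdlow
  have hq₁R : ((q₁:ℝ)) ≤ (d:ℝ) + 2 := by exact_mod_cast hq₁u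
  -- angular bounds for θ
  have hq₂R : (q₂:ℝ) = (m:ℝ) - (M:ℝ)*(mdiv:ℝ) := by
    have : q₂ = m - (M:ℤ)*mdiv := by rw [hq₂, hmdiv, Int.emod_def]
    exact_mod_cast this
  have hθq : θ*(M:ℝ)/(2*π) - (q₂:ℝ) = Θ*(M:ℝ)/(2*π) - m := by
    rw [hθ, hq₂R]
    field_simp
    ring
  have h2π : (0:ℝ) < 2*π := by positivity
  have hmb2 := abs_le.1 hmb
  have hlow : ((q₂:ℝ) - 1/2)*(2*π) ≤ θ*(M:ℝ) := by
    have h5 : (q₂:ℝ) - 1/2 ≤ θ*(M:ℝ)/(2*π) := by linarith [hθq]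
    calc ((q₂:ℝ) - 1/2)*(2*π) ≤ (θ*(M:ℝ)/(2*π))*(2*π) :=
          mul_le_mul_of_nonneg_right h5 h2π.le
      _ = θ*(M:ℝ) := by field_simp
  have hhigh : θ*(M:ℝ) ≤ ((q₂:ℝ) + 1/2)*(2*π) := by
    have h5 : θ*(M:ℝ)/(2*π) ≤ (q₂:ℝ) + 1/2 := by linarith [hθq]
    calc θ*(M:ℝ) = (θ*(M:ℝ)/(2*π))*(2*π) := by field_simp
      _ ≤ ((q₂:ℝ) + 1/2)*(2*π) := mul_le_mul_of_nonneg_right h5 h2π.le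
  have hθl : 2*π*((q₂:ℝ)-1)/M ≤ θ := by
    rw [div_le_iff₀ hM0]
    nlinarith
  have hθu : θ ≤ 2*π*((q₂:ℝ)+1)/M := by
    rw [le_div_iff₀ hM0]
    nlinarith
  -- dmod bound
  have eamod : ((a % (M:ℤ) : ℤ):ℝ) = (a:ℝ) - (M:ℝ)*((a / (M:ℤ) : ℤ):ℝ) := by
    have h : a % (M:ℤ) = a - (M:ℤ)*(a/(M:ℤ)) := by rw [Int.emod_def]
    exact_mod_cast h
  have hk' : |((a % (M:ℤ) : ℤ):ℝ) - (q₂:ℝ) - ((k - a/(M:ℤ) + mdiv : ℤ):ℝ)*M| ≤ 5 := by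
    have e : ((a % (M:ℤ) : ℤ):ℝ) - (q₂:ℝ) - ((k - a/(M:ℤ) + mdiv : ℤ):ℝ)*M
        = (a:ℝ) - (m:ℝ) - (k:ℝ)*M := by
      rw [eamod, hq₂R]
      push_cast
      ring
    rw [e]
    exact hma
  have hamod0 : 0 ≤ a % (M:ℤ) := Int.emod_nonneg a (ne_of_gt hMZ)
  have hamodM : a % (M:ℤ) < M := Int.emod_lt_of_pos a hMZ
  have hdm : ((dmod M (a % (M:ℤ)) q₂ : ℤ):ℝ) ≤ 10 := by
    apply dmod_le_real M _ q₂ (k - a/(M:ℤ) + mdiv) 10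
    · rw [abs_le]
      omega
    · exact le_trans hk' (by norm_num)
  -- conclude
  have hcos : Real.cos θ = Real.cos Θ := by
    rw [hθ]
    exact Real.cos_sub_int_mul_two_pi Θ mdiv
  have hsin : Real.sin θ = Real.sin Θ := by
    rw [hθ]
    exact sin_shift Θ mdiv
  refine ⟨(q₁, q₂), ⟨by omega, by simpa using by linarith [hq₁R] , hq₂0, by omega⟩, ?_, hdm, ?_⟩
  · have h : |d - q₁| ≤ (10:ℤ) := by
      rw [abs_le]
      omega
    exact_mod_cast h
  · refine ⟨R, θ, hRl, hRu, hθl, hθu, ?_⟩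
    simp only [Prod.mk.injEq]
    exact ⟨by rw [hcos]; exact hpx, by rw [hsin]; exact hpy⟩

lemma sandwich_of (M : ℕ) (hM : 1000 ≤ M) (dR e : ℝ)
    (hd1 : (M:ℝ)/4 - 2 ≤ dR) (hd2 : dR ≤ (M:ℝ)/2 - 100)
    (h1 : π*(dR-2)/M ≤ e) (h2 : e ≤ π*(dR+2)/M) :
    Real.sin (π*(dR-2)/M) ≤ Real.sin e ∧ Real.sin e ≤ Real.sin (π*(dR+2)/M) := by
  have hπ := Real.pi_pos
  have hMR : (1000:ℝ) ≤ M := by exact_mod_cast hM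
  have hM0 : (0:ℝ) < M := by linarith
  have ha : 0 ≤ π*(dR-2)/M := div_nonneg (mul_nonneg hπ.le (by linarith)) hM0.le
  have hb : π*(dR+2)/M ≤ π/2 := by
    rw [div_le_div_iff₀ hM0 (by norm_num : (0:ℝ) < 2)]
    nlinarith [mul_le_mul_of_nonneg_left (show dR+2 ≤ (M:ℝ)/2 - 98 by linarith) hπ.le]
  exact ⟨sin_mono ha h1 (le_trans h2 hb), sin_mono (le_trans ha h1) h2 hb⟩


set_option maxHeartbeats 2000000 in
/-- Lemma 3.8 (orthogonality): a two-to-one correspondence `κ : 𝒥 → 𝒥̃` such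
that differences of points from sectors `D_{j₁}`, `D_{j₂}` land in a bounded
neighbourhood (in the index space) of `κ(j₁,j₂)`. -/
theorem orthogonality_lemma :
    ∃ M₀ : ℕ, ∃ C : ℝ, 0 < C ∧
      ∀ M : ℕ, M₀ ≤ M → ∀ N : ℝ, (M : ℝ) ^ 2 ≤ N →
        ∃ κ : ℤ × ℤ → ℤ × ℤ,
          (∀ p ∈ Jset M, κ p ∈ Jtset M) ∧
          (∀ q ∈ Jtset M,
            {p | p ∈ Jset M ∧ κ p = q}.ncard = 2 ∨ {p | p ∈ Jset M ∧ κ p = q} = ∅) ∧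
          (∀ p ∈ Jset M, ∀ k₁ ∈ Dsector M N p.1, ∀ k₂ ∈ Dsector M N p.2,
            ∃ q ∈ Jtset M, (|(κ p).1 - q.1| : ℝ) ≤ C ∧
              (dmod M (κ p).2 q.2 : ℝ) ≤ C ∧ k₁ - k₂ ∈ Dtarget M N q) := by
  refine ⟨1000, 10, by norm_num, ?_⟩
  intro M hM N hN
  refine ⟨kappa M, fun p hp => maps_lemma M hM p hp, ?_, ?_⟩
  · intro q hq
    by_cases hd : ((M:ℝ)/4 - 2 ≤ (q.1:ℝ) ∧ (q.1:ℝ) ≤ (M:ℝ)/2 - 100)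
    · left; exact fiber_lemma M hM q hq hd.1 hd.2
    · right
      rw [Set.eq_empty_iff_forall_notMem]
      rintro p ⟨hpJ, hpk⟩
      apply hd
      have h5 := hpJ.2.2.2.2.1
      have h6 := hpJ.2.2.2.2.2
      have e : q.1 = dmod M p.1 p.2 := by rw [← hpk, kappa_fst]
      rw [e]
      exact ⟨h5, h6⟩
  · intro p hp k₁ hk₁ k₂ hk₂
    obtain ⟨r₁, θ₁, hr₁, hr₁', hθ₁l, hθ₁u, hk₁e⟩ := hk₁
    obtain ⟨r₂, θ₂, hr₂, hr₂', hθ₂l, hθ₂u, hk₂e⟩ := hk₂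
    obtain ⟨h1, h2, h3, h4, h5, h6⟩ := hp
    have hMZ : (1000:ℤ) ≤ (M:ℤ) := by exact_mod_cast hM
    have hMR : (1000:ℝ) ≤ (M:ℝ) := by exact_mod_cast hM
    set d := dmod M p.1 p.2 with hd
    have hd1z : (M:ℤ) - 8 ≤ 4*d := by
      have : (M:ℝ) - 8 ≤ 4*((d:ℤ):ℝ) := by linarith
      exact_mod_cast this
    have hd2z : 2*d ≤ (M:ℤ) - 200 := by
      have : 2*((d:ℤ):ℝ) ≤ (M:ℝ) - 200 := by linarith
      exact_mod_cast this
    have hcases : p.1 - p.2 = d ∨ p.1 - p.2 = -d ∨ p.1 - p.2 = (M:ℤ) - d ∨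
        p.1 - p.2 = d - M := by
      have hdd := hd
      unfold dmod at hdd
      rcases abs_cases (p.1 - p.2) with ⟨h,h'⟩|⟨h,h'⟩ <;> omega
    have hkdiff : k₁ - k₂ = ((r₁*Real.cos θ₁ - r₂*Real.cos θ₂,
        r₁*Real.sin θ₁ - r₂*Real.sin θ₂) : ℝ×ℝ) := by
      rw [hk₁e, hk₂e]; rfl
    have hq1M : d % (M:ℤ) = d := Int.emod_eq_of_lt (by omega) (by omega)
    have hnd : (-d) % (M:ℤ) = M - d := by
      have ha1 : (-d + M) % (M:ℤ) = (-d) % M := emod_add_shift _ _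
      have ha2 : (-d + M) % (M:ℤ) = -d + M := Int.emod_eq_of_lt (by omega) (by omega)
      omega
    have hMd : ((M:ℤ) - d) % (M:ℤ) = M - d := Int.emod_eq_of_lt (by omega) (by omega)
    have hdd : 2*(d/2) ≤ d ∧ d ≤ 2*(d/2)+1 := by omega
    have hMM4 : 4*((M:ℤ)/4) ≤ (M:ℤ) ∧ (M:ℤ) ≤ 4*((M:ℤ)/4)+3 := by omega
    have cdd1 : 2*(((d/2 : ℤ)):ℝ) ≤ (d:ℝ) := by exact_mod_cast hdd.1
    have cdd2 : (d:ℝ) ≤ 2*(((d/2 : ℤ)):ℝ)+1 := by exact_mod_cast hdd.2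
    have cMM1 : 4*((((M:ℤ)/4 : ℤ)):ℝ) ≤ (M:ℝ) := by exact_mod_cast hMM4.1
    have cMM2 : (M:ℝ) ≤ 4*((((M:ℤ)/4 : ℤ)):ℝ)+3 := by exact_mod_cast hMM4.2
    rcases hcases with hu | hu | hu | hu
    · -- u = d : branch +, b = 1, k = 0
      have huR : (p.1 : ℝ) = (p.2:ℝ) + (d:ℝ) := by exact_mod_cast (show p.1 = p.2 + d by omega)
      have hδ1 : π*((d:ℝ)-2)/M ≤ (θ₁-θ₂)/2 := by
        have e : π*((d:ℝ)-2)/M = (2*π*((p.1:ℝ)-1)/M - 2*π*((p.2:ℝ)+1)/M)/2 := by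
          rw [huR]; field_simp; ring
        rw [e]; linarith
      have hδ2 : (θ₁-θ₂)/2 ≤ π*((d:ℝ)+2)/M := by
        have e : π*((d:ℝ)+2)/M = (2*π*((p.1:ℝ)+1)/M - 2*π*((p.2:ℝ)-1)/M)/2 := by
          rw [huR]; field_simp; ring
        rw [e]; linarith
      obtain ⟨hs1, hs2⟩ := sandwich_of M hM (d:ℝ) ((θ₁-θ₂)/2) h5 h6 hδ1 hδ2
      have hbr : (p.1 - p.2) % (M:ℤ) = d := by rw [hu, hq1M]
      have hκ : kappa M p = (d, (p.2 + (d/2 + (M:ℤ)/4)) % M) := by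
        unfold kappa; rw [← hd, if_pos hbr]
      have ha : |((p.2 + (d/2 + (M:ℤ)/4) : ℤ):ℝ) - ((p.1:ℝ)+(p.2:ℝ))/2
          - 1*(M:ℝ)/4 - ((0:ℤ):ℝ)*(M:ℝ)| ≤ 2 := by
        rw [abs_le]; constructor <;> push_cast <;> push_cast at huR <;> linarith
      obtain ⟨q, hqJ, hA, hB, hC⟩ := main_case M N hM hN p.1 p.2 d
        (p.2 + (d/2 + (M:ℤ)/4)) 0 1 θ₁ θ₂ r₁ r₂ (Or.inl rfl) h5 h6
        hθ₁l hθ₁u hθ₂l hθ₂u hr₁ hr₁' hr₂ hr₂'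
        (by rw [one_mul]; exact hs1) (by rw [one_mul]; exact hs2) ha
      refine ⟨q, hqJ, ?_, ?_, ?_⟩
      · rw [hκ]
        push_cast at hA
        exact hA
      · rw [hκ]; exact hB
      · rw [hkdiff]; exact hC
    · -- u = -d : branch -, b = -1, k = 0
      have huR : (p.1 : ℝ) = (p.2:ℝ) - (d:ℝ) := by exact_mod_cast (show p.1 = p.2 - d by omega)
      have hδ1 : π*((d:ℝ)-2)/M ≤ (θ₂-θ₁)/2 := by
        have e : π*((d:ℝ)-2)/M = (2*π*((p.2:ℝ)-1)/M - 2*π*((p.1:ℝ)+1)/M)/2 := by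
          rw [huR]; field_simp; ring
        rw [e]; linarith
      have hδ2 : (θ₂-θ₁)/2 ≤ π*((d:ℝ)+2)/M := by
        have e : π*((d:ℝ)+2)/M = (2*π*((p.2:ℝ)+1)/M - 2*π*((p.1:ℝ)-1)/M)/2 := by
          rw [huR]; field_simp; ring
        rw [e]; linarith
      obtain ⟨hs1, hs2⟩ := sandwich_of M hM (d:ℝ) ((θ₂-θ₁)/2) h5 h6 hδ1 hδ2
      have hsin : (-1:ℝ) * Real.sin ((θ₁-θ₂)/2) = Real.sin ((θ₂-θ₁)/2) := by
        rw [show (θ₂-θ₁)/2 = -((θ₁-θ₂)/2) by ring, Real.sin_neg]; ring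
      have hbr : ¬ (p.1 - p.2) % (M:ℤ) = d := by rw [hu, hnd]; omega
      have hκ : kappa M p = (d, (p.2 - (d/2 + (M:ℤ)/4)) % M) := by
        unfold kappa; rw [← hd, if_neg hbr]
      have ha : |((p.2 - (d/2 + (M:ℤ)/4) : ℤ):ℝ) - ((p.1:ℝ)+(p.2:ℝ))/2
          - (-1)*(M:ℝ)/4 - ((0:ℤ):ℝ)*(M:ℝ)| ≤ 2 := by
        rw [abs_le]; constructor <;> push_cast <;> push_cast at huR <;> linarith
      obtain ⟨q, hqJ, hA, hB, hC⟩ := main_case M N hM hN p.1 p.2 d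
        (p.2 - (d/2 + (M:ℤ)/4)) 0 (-1) θ₁ θ₂ r₁ r₂ (Or.inr rfl) h5 h6
        hθ₁l hθ₁u hθ₂l hθ₂u hr₁ hr₁' hr₂ hr₂'
        (by rw [hsin]; exact hs1) (by rw [hsin]; exact hs2) ha
      refine ⟨q, hqJ, ?_, ?_, ?_⟩
      · rw [hκ]
        push_cast at hA
        exact hA
      · rw [hκ]; exact hB
      · rw [hkdiff]; exact hC
    · -- u = M - d : branch -, b = 1, k = -1
      have huR : (p.1 : ℝ) = (p.2:ℝ) + (M:ℝ) - (d:ℝ) := by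
        exact_mod_cast (show p.1 = p.2 + M - d by omega)
      have hδ1 : π*((d:ℝ)-2)/M ≤ π - (θ₁-θ₂)/2 := by
        have e : π*((d:ℝ)-2)/M = π - (2*π*((p.1:ℝ)+1)/M - 2*π*((p.2:ℝ)-1)/M)/2 := by
          rw [huR]; field_simp; ring
        rw [e]; linarith
      have hδ2 : π - (θ₁-θ₂)/2 ≤ π*((d:ℝ)+2)/M := by
        have e : π*((d:ℝ)+2)/M = π - (2*π*((p.1:ℝ)-1)/M - 2*π*((p.2:ℝ)+1)/M)/2 := by
          rw [huR]; field_simp; ring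
        rw [e]; linarith
      obtain ⟨hs1, hs2⟩ := sandwich_of M hM (d:ℝ) (π - (θ₁-θ₂)/2) h5 h6 hδ1 hδ2
      have hsin : (1:ℝ) * Real.sin ((θ₁-θ₂)/2) = Real.sin (π - (θ₁-θ₂)/2) := by
        rw [Real.sin_pi_sub]; ring
      have hbr : ¬ (p.1 - p.2) % (M:ℤ) = d := by rw [hu, hMd]; omega
      have hκ : kappa M p = (d, (p.2 - (d/2 + (M:ℤ)/4)) % M) := by
        unfold kappa; rw [← hd, if_neg hbr]
      have ha : |((p.2 - (d/2 + (M:ℤ)/4) : ℤ):ℝ) - ((p.1:ℝ)+(p.2:ℝ))/2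
          - 1*(M:ℝ)/4 - ((-1:ℤ):ℝ)*(M:ℝ)| ≤ 2 := by
        rw [abs_le]; constructor <;> push_cast <;> push_cast at huR <;> linarith
      obtain ⟨q, hqJ, hA, hB, hC⟩ := main_case M N hM hN p.1 p.2 d
        (p.2 - (d/2 + (M:ℤ)/4)) (-1) 1 θ₁ θ₂ r₁ r₂ (Or.inl rfl) h5 h6
        hθ₁l hθ₁u hθ₂l hθ₂u hr₁ hr₁' hr₂ hr₂'
        (by rw [hsin]; exact hs1) (by rw [hsin]; exact hs2) ha
      refine ⟨q, hqJ, ?_, ?_, ?_⟩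
      · rw [hκ]
        push_cast at hA
        exact hA
      · rw [hκ]; exact hB
      · rw [hkdiff]; exact hC
    · -- u = d - M : branch +, b = -1, k = 1
      have huR : (p.1 : ℝ) = (p.2:ℝ) + (d:ℝ) - (M:ℝ) := by
        exact_mod_cast (show p.1 = p.2 + d - M by omega)
      have hδ1 : π*((d:ℝ)-2)/M ≤ π + (θ₁-θ₂)/2 := by
        have e : π*((d:ℝ)-2)/M = π + (2*π*((p.1:ℝ)-1)/M - 2*π*((p.2:ℝ)+1)/M)/2 := by
          rw [huR]; field_simp; ring
        rw [e]; linarith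
      have hδ2 : π + (θ₁-θ₂)/2 ≤ π*((d:ℝ)+2)/M := by
        have e : π*((d:ℝ)+2)/M = π + (2*π*((p.1:ℝ)+1)/M - 2*π*((p.2:ℝ)-1)/M)/2 := by
          rw [huR]; field_simp; ring
        rw [e]; linarith
      obtain ⟨hs1, hs2⟩ := sandwich_of M hM (d:ℝ) (π + (θ₁-θ₂)/2) h5 h6 hδ1 hδ2
      have hsin : (-1:ℝ) * Real.sin ((θ₁-θ₂)/2) = Real.sin (π + (θ₁-θ₂)/2) := by
        rw [show π + (θ₁-θ₂)/2 = π - (-((θ₁-θ₂)/2)) by ring, Real.sin_pi_sub,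
          Real.sin_neg]
        ring
      have hbr : (p.1 - p.2) % (M:ℤ) = d := by rw [hu, emod_sub_shift, hq1M]
      have hκ : kappa M p = (d, (p.2 + (d/2 + (M:ℤ)/4)) % M) := by
        unfold kappa; rw [← hd, if_pos hbr]
      have ha : |((p.2 + (d/2 + (M:ℤ)/4) : ℤ):ℝ) - ((p.1:ℝ)+(p.2:ℝ))/2
          - (-1)*(M:ℝ)/4 - ((1:ℤ):ℝ)*(M:ℝ)| ≤ 2 := by
        rw [abs_le]; constructor <;> push_cast <;> push_cast at huR <;> linarith
      obtain ⟨q, hqJ, hA, hB, hC⟩ := main_case M N hM hN p.1 p.2 d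
        (p.2 + (d/2 + (M:ℤ)/4)) 1 (-1) θ₁ θ₂ r₁ r₂ (Or.inr rfl) h5 h6
        hθ₁l hθ₁u hθ₂l hθ₂u hr₁ hr₁' hr₂ hr₂'
        (by rw [hsin]; exact hs1) (by rw [hsin]; exact hs2) ha
      refine ⟨q, hqJ, ?_, ?_, ?_⟩
      · rw [hκ]
        push_cast at hA
        exact hA
      · rw [hκ]; exact hB
      · rw [hkdiff]; exact hC
end
end

section
/- Let d ≥ 2 be an integer and γ = (γ_1,…,γ_d) with every γ_j > 0. There exist constants 0 < c ≤ C and an integer N_0 ≥ 2, depending only on d and γ, such that for every integer N ≥ N_0 there exists n ∈ ℤ for which the lattice points K := (N/γ_1, (n−1)/γ_2, 0,…,0) and K̃ := ((1−N)/γ_1, n/γ_2, 0,…,0) of Z_γ^d satisfy: (a) −γ_2^{-2} < |K−K̃| + |K|² − |K̃|² ≤ γ_2^{-2}; (b) cN ≤ | −|K−K̃| + |K|² − |K̃|² | ≤ CN; (c) cN ≤ |K| ≤ CN, cN ≤ |K̃| ≤ CN, and cN ≤ |K−K̃| ≤ CN. (Construction of a resonant frequency pair for arbitrary periods in dimension d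 ≥ 2, used in Sections 1 and 5.) -/
set_option maxHeartbeats 1000000

noncomputable section

lemma norm_two_comp (d : ℕ) (a b : ℝ)
    (v : EuclideanSpace ℝ (Fin d))
    (hv : ∀ j : Fin d, v j = if (j : ℕ) = 0 then a else if (j : ℕ) = 1 then b else 0)
    (h0 : 0 < d) (h1 : 1 < d) :
    ‖v‖ = Real.sqrt (a ^ 2 + b ^ 2) := by
  rw [EuclideanSpace.norm_eq]
  congr 1
  have hsub : ({⟨0, h0⟩, ⟨1, h1⟩} : Finset (Fin d)) ⊆ Finset.univ := Finset.subset_univ _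
  rw [← Finset.sum_subset hsub]
  · rw [Finset.sum_pair (by simp [Fin.ext_iff] : (⟨0, h0⟩ : Fin d) ≠ ⟨1, h1⟩)]
    simp [hv]
  · intro x _ hx
    simp only [Finset.mem_insert, Finset.mem_singleton] at hx
    push_neg at hx
    have hx0 : (x : ℕ) ≠ 0 := fun h => hx.1 (by ext; simp [h])
    have hx1 : (x : ℕ) ≠ 1 := fun h => hx.2 (by ext; simp [h])
    simp [hv, hx0, hx1]

lemma abs_le_sqrt_sq_add_sq (a b : ℝ) : |a| ≤ Real.sqrt (a ^ 2 + b ^ 2) := by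
  have h := Real.sqrt_le_sqrt (le_add_of_nonneg_right (sq_nonneg b) : a ^ 2 ≤ a ^ 2 + b ^ 2)
  rwa [Real.sqrt_sq_eq_abs] at h

lemma sqrt_sq_add_sq_le (a b : ℝ) : Real.sqrt (a ^ 2 + b ^ 2) ≤ |a| + |b| := by
  have h : a ^ 2 + b ^ 2 ≤ (|a| + |b|) ^ 2 := by
    nlinarith [sq_abs a, sq_abs b, mul_nonneg (abs_nonneg a) (abs_nonneg b)]
  have h2 := Real.sqrt_le_sqrt h
  rwa [Real.sqrt_sq (by positivity)] at h2

/-- Construction of a resonant frequency pair `K, K̃ ∈ Z_γ^d` for arbitrary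
periods in dimension `d ≥ 2` (Sections 1 and 5). -/
theorem resonant_pair_exists
    (d : ℕ) (hd : 2 ≤ d) (γ : Fin d → ℝ) (hγ : ∀ j, 0 < γ j) :
    ∃ c C : ℝ, ∃ N₀ : ℕ, 0 < c ∧ c ≤ C ∧ 2 ≤ N₀ ∧
      ∀ N : ℕ, N₀ ≤ N →
        ∃ n : ℤ, ∃ K Kt : EuclideanSpace ℝ (Fin d),
          K = (fun j : Fin d => if (j : ℕ) = 0 then (N : ℝ) / γ j
                else if (j : ℕ) = 1 then ((n : ℝ) - 1) / γ j else 0) ∧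
          Kt = (fun j : Fin d => if (j : ℕ) = 0 then (1 - (N : ℝ)) / γ j
                else if (j : ℕ) = 1 then (n : ℝ) / γ j else 0) ∧
          (-(γ ⟨1, by omega⟩)⁻¹ ^ 2 < ‖K - Kt‖ + ‖K‖ ^ 2 - ‖Kt‖ ^ 2 ∧
            ‖K - Kt‖ + ‖K‖ ^ 2 - ‖Kt‖ ^ 2 ≤ (γ ⟨1, by omega⟩)⁻¹ ^ 2) ∧
          (c * N ≤ |-‖K - Kt‖ + ‖K‖ ^ 2 - ‖Kt‖ ^ 2| ∧
            |-‖K - Kt‖ + ‖K‖ ^ 2 - ‖Kt‖ ^ 2| ≤ C * N) ∧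
          (c * N ≤ ‖K‖ ∧ ‖K‖ ≤ C * N) ∧
          (c * N ≤ ‖Kt‖ ∧ ‖Kt‖ ≤ C * N) ∧
          (c * N ≤ ‖K - Kt‖ ∧ ‖K - Kt‖ ≤ C * N) := by
  have h0 : 0 < d := by omega
  have h1 : 1 < d := by omega
  set g1 : ℝ := γ ⟨0, h0⟩ with hg1def
  set g2 : ℝ := γ ⟨1, h1⟩ with hg2def
  have hg1 : 0 < g1 := hγ _
  have hg2 : 0 < g2 := hγ _
  set u1 : ℝ := g1⁻¹ with hu1def
  set u2 : ℝ := g2⁻¹ with hu2def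
  have hu1 : 0 < u1 := by positivity
  have hu2 : 0 < u2 := by positivity
  have hu2sq : (0:ℝ) < u2 ^ 2 := by positivity
  have hgu1 : g1 * u1 = 1 := by rw [hu1def]; exact mul_inv_cancel₀ hg1.ne'
  have hgu2 : g2 * u2 = 1 := by rw [hu2def]; exact mul_inv_cancel₀ hg2.ne'
  have hg2inv : (γ ⟨1, h1⟩)⁻¹ = u2 := rfl
  set CA : ℝ := 2 * u1 + u2 + 2 * u1 ^ 2 + u2 ^ 2 with hCAdef
  set Cn : ℝ := CA / u2 ^ 2 / 2 + 2 with hCndef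
  have hCA : 0 < CA := by positivity
  have hCn : 0 < Cn := by positivity
  set c : ℝ := u1 / 2 with hcdef
  set C : ℝ := 5 * u1 + (Cn + 3) * u2 + 2 * u2 ^ 2 + c with hCdef
  have hc : 0 < c := by positivity
  have hcC : c ≤ C := by nlinarith
  clear_value g1 g2 u1 u2 CA Cn c C
  refine ⟨c, C, max 2 ⌈g1 * u2 ^ 2⌉₊, hc, hcC, le_max_left _ _, ?_⟩
  intro N hN
  have hN2 : 2 ≤ N := le_trans (le_max_left _ _) hN
  have hNr : (2 : ℝ) ≤ (N : ℝ) := by exact_mod_cast hN2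
  have hN1 : (1 : ℝ) ≤ (N : ℝ) := by linarith
  have hNg : g1 * u2 ^ 2 ≤ (N : ℝ) :=
    Nat.ceil_le.mp (le_trans (le_max_right 2 _) hN)
  have hNu1 : (0:ℝ) < (N : ℝ) * u1 := mul_pos (by linarith) hu1
  have hNu2 : (0:ℝ) < (N : ℝ) * u2 := mul_pos (by linarith) hu2
  have hNu22 : (0:ℝ) < (N : ℝ) * u2 ^ 2 := mul_pos (by linarith) hu2sq
  have hu2N : u2 ^ 2 ≤ (N : ℝ) * u1 := by
    have h := mul_le_mul_of_nonneg_right hNg (le_of_lt hu1)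
    calc u2 ^ 2 = g1 * u2 ^ 2 * u1 := by rw [mul_comm g1, mul_assoc, hgu1, mul_one]
      _ ≤ (N : ℝ) * u1 := h
  set R : ℝ := Real.sqrt (((2 * (N : ℝ) - 1) * u1) ^ 2 + u2 ^ 2) with hRdef
  set A : ℝ := R + (2 * (N : ℝ) - 1) * u1 ^ 2 + u2 ^ 2 with hAdef
  set n : ℤ := ⌈(A / u2 ^ 2 - 1) / 2⌉ with hndef
  have hx1 : A ≤ (2 * (n : ℝ) + 1) * u2 ^ 2 := by
    have h := Int.le_ceil ((A / u2 ^ 2 - 1) / 2)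
    rw [← hndef] at h
    have h2 : A / u2 ^ 2 ≤ 2 * (n : ℝ) + 1 := by linarith
    rw [div_le_iff₀ hu2sq] at h2
    linarith
  have hx2 : (2 * (n : ℝ) - 1) * u2 ^ 2 < A := by
    have h := Int.ceil_lt_add_one ((A / u2 ^ 2 - 1) / 2)
    rw [← hndef] at h
    have h2 : 2 * (n : ℝ) - 1 < A / u2 ^ 2 := by linarith
    rw [lt_div_iff₀ hu2sq] at h2
    linarith
  have hR0 : 0 ≤ R := Real.sqrt_nonneg _
  have h2N1 : (1:ℝ) ≤ 2 * (N : ℝ) - 1 := by linarith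
  have hRlow : (2 * (N : ℝ) - 1) * u1 ≤ R := by
    have h := abs_le_sqrt_sq_add_sq ((2 * (N : ℝ) - 1) * u1) u2
    rw [abs_of_nonneg (by positivity : (0:ℝ) ≤ (2 * (N : ℝ) - 1) * u1)] at h
    · exact h
  have hRup : R ≤ (2 * (N : ℝ) - 1) * u1 + u2 := by
    have h := sqrt_sq_add_sq_le ((2 * (N : ℝ) - 1) * u1) u2
    rwa [abs_of_nonneg (by positivity : (0:ℝ) ≤ (2 * (N : ℝ) - 1) * u1),
      abs_of_pos hu2] at h
  have hRN : (N : ℝ) * u1 ≤ R := by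
    have q : (0:ℝ) ≤ ((N:ℝ) - 1) * u1 := mul_nonneg (by linarith) hu1.le
    linarith only [hRlow, q]
  have hApos : 0 < A := by
    have q : (0:ℝ) < (2 * (N : ℝ) - 1) * u1 ^ 2 :=
      mul_pos (by linarith) (pow_pos hu1 2)
    linarith only [hAdef, hR0, hu2sq, q]
  have hAup : A ≤ CA * N := by
    rw [hCAdef, hAdef]
    have h' : (0:ℝ) ≤ (N : ℝ) - 1 := by linarith
    linarith only [hRup, hu1.le, sq_nonneg u1, mul_nonneg hu2.le h',
      mul_nonneg (sq_nonneg u2) h']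
  have hn0 : 0 ≤ n := by
    have hA' : 0 < A / u2 ^ 2 := div_pos hApos hu2sq
    have h := Int.le_ceil ((A / u2 ^ 2 - 1) / 2)
    rw [← hndef] at h
    have hr : (-1 : ℝ) < (n : ℝ) := by linarith only [h, hA']
    have : (-1 : ℤ) < n := by exact_mod_cast hr
    omega
  have hn0r : (0:ℝ) ≤ (n:ℝ) := by exact_mod_cast hn0
  have hnup : (n : ℝ) ≤ Cn * N := by
    have h : (2 * (n : ℝ) - 1) * u2 ^ 2 < CA * N := lt_of_lt_of_le hx2 hAup
    have h' : 2 * (n : ℝ) - 1 < CA * N / u2 ^ 2 := by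
      rw [lt_div_iff₀ hu2sq]; linarith
    have e : CA * N / u2 ^ 2 = CA / u2 ^ 2 * N := by ring
    rw [e] at h'
    rw [hCndef]
    linarith only [h', hN1]
  clear_value R A n
  refine ⟨n,
    WithLp.toLp 2 (fun j : Fin d => if (j : ℕ) = 0 then (N : ℝ) / γ j
      else if (j : ℕ) = 1 then ((n : ℝ) - 1) / γ j else 0),
    WithLp.toLp 2 (fun j : Fin d => if (j : ℕ) = 0 then (1 - (N : ℝ)) / γ j
      else if (j : ℕ) = 1 then (n : ℝ) / γ j else 0),
    rfl, rfl, ?_⟩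
  set K : EuclideanSpace ℝ (Fin d) :=
    WithLp.toLp 2 (fun j : Fin d => if (j : ℕ) = 0 then (N : ℝ) / γ j
      else if (j : ℕ) = 1 then ((n : ℝ) - 1) / γ j else 0) with hKdef
  set Kt : EuclideanSpace ℝ (Fin d) :=
    WithLp.toLp 2 (fun j : Fin d => if (j : ℕ) = 0 then (1 - (N : ℝ)) / γ j
      else if (j : ℕ) = 1 then (n : ℝ) / γ j else 0) with hKtdef
  have hjval : ∀ (j : Fin d) (m : ℕ) (h : m < d), (j : ℕ) = m → γ j = γ ⟨m, h⟩ := by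
    intro j m h hj; congr 1; ext; exact hj
  have hnK : ‖K‖ = Real.sqrt (((N : ℝ) * u1) ^ 2 + (((n : ℝ) - 1) * u2) ^ 2) := by
    apply norm_two_comp d _ _ _ _ h0 h1
    intro j
    show (if (j : ℕ) = 0 then (N : ℝ) / γ j else if (j : ℕ) = 1 then ((n : ℝ) - 1) / γ j else 0) = _
    split_ifs with ha hb
    · rw [hjval j 0 h0 ha, ← hg1def, hu1def, div_eq_mul_inv]
    · rw [hjval j 1 h1 hb, ← hg2def, hu2def, div_eq_mul_inv]
    · rfl
  have hnKt : ‖Kt‖ = Real.sqrt (((1 - (N : ℝ)) * u1) ^ 2 + ((n : ℝ) * u2) ^ 2) := by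
    apply norm_two_comp d _ _ _ _ h0 h1
    intro j
    show (if (j : ℕ) = 0 then (1 - (N : ℝ)) / γ j else if (j : ℕ) = 1 then (n : ℝ) / γ j else 0) = _
    split_ifs with ha hb
    · rw [hjval j 0 h0 ha, ← hg1def, hu1def, div_eq_mul_inv]
    · rw [hjval j 1 h1 hb, ← hg2def, hu2def, div_eq_mul_inv]
    · rfl
  have hnD : ‖K - Kt‖ = R := by
    rw [hRdef]
    have e : ((2 * (N : ℝ) - 1) * u1) ^ 2 + u2 ^ 2
        = ((2 * (N : ℝ) - 1) * u1) ^ 2 + (-u2) ^ 2 := by ring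
    rw [e]
    apply norm_two_comp d _ _ _ _ h0 h1
    intro j
    have e2 : (K - Kt) j = K j - Kt j := rfl
    rw [e2]
    show (if (j : ℕ) = 0 then (N : ℝ) / γ j else if (j : ℕ) = 1 then ((n : ℝ) - 1) / γ j else 0)
      - (if (j : ℕ) = 0 then (1 - (N : ℝ)) / γ j else if (j : ℕ) = 1 then (n : ℝ) / γ j else 0) = _
    split_ifs with ha hb
    · rw [hjval j 0 h0 ha, ← hg1def, hu1def]
      field_simp; ring
    · rw [hjval j 1 h1 hb, ← hg2def, hu2def]
      field_simp; ring
    · ring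
  have hK2 : ‖K‖ ^ 2 = ((N : ℝ) * u1) ^ 2 + (((n : ℝ) - 1) * u2) ^ 2 := by
    rw [hnK, Real.sq_sqrt (by positivity)]
  have hKt2 : ‖Kt‖ ^ 2 = ((1 - (N : ℝ)) * u1) ^ 2 + ((n : ℝ) * u2) ^ 2 := by
    rw [hnKt, Real.sq_sqrt (by positivity)]
  have hSval : ‖K - Kt‖ + ‖K‖ ^ 2 - ‖Kt‖ ^ 2 = A - 2 * (n : ℝ) * u2 ^ 2 := by
    rw [hnD, hK2, hKt2, hAdef]; ring
  have hDval : -‖K - Kt‖ + ‖K‖ ^ 2 - ‖Kt‖ ^ 2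
      = A - 2 * (n : ℝ) * u2 ^ 2 - 2 * R := by
    rw [hnD, hK2, hKt2, hAdef]; ring
  have hSle : A - 2 * (n : ℝ) * u2 ^ 2 ≤ u2 ^ 2 := by linarith only [hx1]
  have hSgt : -u2 ^ 2 < A - 2 * (n : ℝ) * u2 ^ 2 := by linarith only [hx2]
  have p1 : (0:ℝ) ≤ u2 * ((N:ℝ) - 1) := mul_nonneg hu2.le (by linarith only [hN1])
  have p2 : (0:ℝ) ≤ u2 ^ 2 * ((N:ℝ) - 1) := mul_nonneg hu2sq.le (by linarith only [hN1])
  have p4 : (0:ℝ) ≤ Cn * ((N:ℝ) * u2) := mul_nonneg hCn.le hNu2.le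
  refine ⟨?_, ?_, ?_, ?_, ?_⟩
  · rw [hSval]
    constructor
    · exact hSgt
    · exact hSle
  · rw [hDval]
    have hDneg : A - 2 * (n : ℝ) * u2 ^ 2 - 2 * R < 0 := by
      linarith only [hSle, hu2N, hRN, hNu1]
    rw [abs_of_neg hDneg]
    constructor
    · rw [hcdef]
      linarith only [hSle, hu2N, hRN, hNu1]
    · rw [hCdef, hcdef]
      linarith only [hSgt, hRup, p1, p2, p4, hNu1.le, hu1.le, hu2.le, hNu2.le, hu2sq.le]
  · rw [hnK]
    constructor
    · have h := abs_le_sqrt_sq_add_sq ((N:ℝ) * u1) (((n:ℝ) - 1) * u2)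
      rw [abs_of_pos hNu1] at h
      rw [hcdef]
      linarith only [h, hNu1.le]
    · have h := sqrt_sq_add_sq_le ((N:ℝ) * u1) (((n:ℝ) - 1) * u2)
      rw [abs_of_pos hNu1, abs_mul, abs_of_pos hu2] at h
      have e2 : |(n:ℝ) - 1| * u2 ≤ ((n:ℝ) + 1) * u2 :=
        mul_le_mul_of_nonneg_right
          (abs_le.mpr ⟨by linarith only [hn0r], by linarith only [hn0r]⟩) hu2.le
      have e3 : ((n:ℝ) + 1) * u2 ≤ (Cn * N + N) * u2 :=
        mul_le_mul_of_nonneg_right (by linarith only [hnup, hN1]) hu2.le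
      rw [hCdef, hcdef]
      linarith only [h, e2, e3, hNu1.le, hNu2.le, hNu22.le, hu1.le, hu2.le, hu2sq.le, p4]
  · rw [hnKt]
    constructor
    · have h := abs_le_sqrt_sq_add_sq ((1 - (N:ℝ)) * u1) ((n:ℝ) * u2)
      have e : |(1 - (N:ℝ)) * u1| = ((N:ℝ) - 1) * u1 := by
        rw [abs_mul, abs_of_pos hu1, abs_of_nonpos (by linarith only [hN1])]
        ring
      rw [e] at h
      have q : (0:ℝ) ≤ ((N:ℝ) - 2) * u1 := mul_nonneg (by linarith only [hNr]) hu1.le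
      rw [hcdef]
      linarith only [h, q]
    · have h := sqrt_sq_add_sq_le ((1 - (N:ℝ)) * u1) ((n:ℝ) * u2)
      have e : |(1 - (N:ℝ)) * u1| = ((N:ℝ) - 1) * u1 := by
        rw [abs_mul, abs_of_pos hu1, abs_of_nonpos (by linarith only [hN1])]
        ring
      have e2 : |(n:ℝ) * u2| = (n:ℝ) * u2 := abs_of_nonneg (mul_nonneg hn0r hu2.le)
      rw [e, e2] at h
      have e3 : (n:ℝ) * u2 ≤ Cn * N * u2 := mul_le_mul_of_nonneg_right hnup hu2.le
      rw [hCdef, hcdef]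
      linarith only [h, e3, hNu1.le, hNu2.le, hNu22.le, hu1.le, hu2.le, hu2sq.le, p4]
  · rw [hnD]
    constructor
    · rw [hcdef]
      linarith only [hRN, hNu1.le]
    · rw [hCdef, hcdef]
      linarith only [hRup, p1, p2, p4, hNu1.le, hu1.le, hNu22.le, hu2.le, hNu2.le, hu2sq.le]
end
end

section
/- Let γ_2 > 0. There exist constants t_0 > 0 and c > 0, depending only on γ_2, with the following property: for all real numbers A, B and every real t with 0 < |t| ≤ t_0, if |A| ≤ γ_2^{-2} and |B| ≥ 100/|t|, then |∫_0^t e^{i t′ A} dt′| − |∫_0^t e^{i t′ B} dt′| ≥ c·|t|. (This is the lower bound on the second Picard iterate at a resonant frequency: combined with the resonant pair K, K̃, where A = |K−K̃| + |K|² − |K̃|² and B = −|K−K̃| + |K|² − |K̃|², it is the core estimate in the proof that the data-to-solution map is not C², Lemma 6.2 (i)–(ii).) -/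
open intervalIntegral

noncomputable section

/-- Lower bound on the second Picard iterate at a resonant frequency
(core estimate in the proof of Lemma 6.2 (i)–(ii)). -/
theorem picard_iterate_lower_bound (γ₂ : ℝ) (hγ₂ : 0 < γ₂) :
    ∃ t₀ c : ℝ, 0 < t₀ ∧ 0 < c ∧
      ∀ A B t : ℝ, t ≠ 0 → |t| ≤ t₀ →
        |A| ≤ (γ₂ ^ 2)⁻¹ → 100 / |t| ≤ |B| →
        c * |t| ≤
          ‖∫ t' in (0:ℝ)..t, Complex.exp (Complex.I * (t' : ℂ) * (A : ℂ))‖ -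
            ‖∫ t' in (0:ℝ)..t, Complex.exp (Complex.I * (t' : ℂ) * (B : ℂ))‖ := by
  refine ⟨γ₂ ^ 2 / 8, 1/2, by positivity, by norm_num, ?_⟩
  intro A B t ht ht0 hA hB
  have htpos : 0 < |t| := abs_pos.mpr ht
  -- B is nonzero
  have hBpos : 0 < |B| := lt_of_lt_of_le (by positivity) hB
  have hBne : (B:ℝ) ≠ 0 := by simpa [abs_pos] using hBpos
  -- bound on |t| * |A|
  have htA : |t| * |A| ≤ 1/8 := by
    calc |t| * |A| ≤ (γ₂ ^ 2 / 8) * (γ₂ ^ 2)⁻¹ :=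
          mul_le_mul ht0 hA (abs_nonneg _) (by positivity)
      _ = 1/8 := by field_simp
  -- ===== A part: lower bound =====
  have hcont : Continuous fun t' : ℝ =>
      Complex.exp (Complex.I * (t' : ℂ) * (A : ℂ)) := by continuity
  have hsplit : (∫ t' in (0:ℝ)..t, Complex.exp (Complex.I * (t' : ℂ) * (A : ℂ)))
      = (t : ℂ) + ∫ t' in (0:ℝ)..t,
          (Complex.exp (Complex.I * (t' : ℂ) * (A : ℂ)) - 1) := by
    rw [intervalIntegral.integral_sub (hcont.intervalIntegrable 0 t)
      intervalIntegrable_const]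
    simp
  have herr : ‖∫ t' in (0:ℝ)..t,
      (Complex.exp (Complex.I * (t' : ℂ) * (A : ℂ)) - 1)‖ ≤ (1/4) * |t| := by
    have key := intervalIntegral.norm_integral_le_of_norm_le_const
      (a := (0:ℝ)) (b := t) (C := 1/4)
      (f := fun t' => Complex.exp (Complex.I * (t' : ℂ) * (A : ℂ)) - 1) ?_
    · calc _ ≤ 1/4 * |t - 0| := key
        _ = 1/4 * |t| := by rw [sub_zero]
    · intro x hx
      have hxle : |x| ≤ |t| := by
        rcases le_total 0 t with h | h
        · rw [Set.uIoc_of_le h] at hx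
          rw [abs_of_pos hx.1, abs_of_nonneg h]; exact hx.2
        · rw [Set.uIoc_of_ge h] at hx
          rw [abs_of_nonpos hx.2, abs_of_nonpos h]; linarith [hx.1]
      have habs : ‖Complex.I * (x : ℂ) * (A : ℂ)‖ = |x| * |A| := by
        simp [map_mul, Complex.norm_real]
      have h1 : ‖Complex.I * (x : ℂ) * (A : ℂ)‖ ≤ 1 := by
        rw [habs]
        have : |x| * |A| ≤ |t| * |A| :=
          mul_le_mul_of_nonneg_right hxle (abs_nonneg _)
        linarith
      have h2 := Complex.norm_exp_sub_one_le h1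
      rw [habs] at h2
      calc ‖Complex.exp (Complex.I * (x : ℂ) * (A : ℂ)) - 1‖
          = ‖Complex.exp (Complex.I * (x : ℂ) * (A : ℂ)) - 1‖ := rfl
        _ ≤ 2 * (|x| * |A|) := h2
        _ ≤ 2 * (|t| * |A|) := by
            have : |x| * |A| ≤ |t| * |A| :=
              mul_le_mul_of_nonneg_right hxle (abs_nonneg _)
            linarith
        _ ≤ 1/4 := by linarith
  have hAlow : (3/4) * |t| ≤
      ‖∫ t' in (0:ℝ)..t, Complex.exp (Complex.I * (t' : ℂ) * (A : ℂ))‖ := by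
    rw [hsplit]
    set E := ∫ t' in (0:ℝ)..t,
        (Complex.exp (Complex.I * (t' : ℂ) * (A : ℂ)) - 1) with hE
    have h1 : ‖(t : ℂ)‖ - ‖E‖ ≤ ‖(t : ℂ) + E‖ := by
      have h2 : ‖(t : ℂ)‖ = ‖((t : ℂ) + E) - E‖ := by ring_nf
      rw [h2]
      have := norm_sub_le ((t : ℂ) + E) E
      linarith
    have htnorm : ‖(t : ℂ)‖ = |t| := Complex.norm_real t
    linarith
  -- ===== B part: upper bound =====
  have hBval : (∫ t' in (0:ℝ)..t, Complex.exp (Complex.I * (t' : ℂ) * (B : ℂ)))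
      = (Complex.exp (Complex.I * (B : ℂ) * (t : ℂ)) - 1) / (Complex.I * B) := by
    have hcB : Complex.I * (B : ℂ) ≠ 0 := by
      apply mul_ne_zero Complex.I_ne_zero
      exact_mod_cast hBne
    have : (∫ t' in (0:ℝ)..t, Complex.exp (Complex.I * (t' : ℂ) * (B : ℂ)))
        = ∫ t' in (0:ℝ)..t, Complex.exp ((Complex.I * (B : ℂ)) * (t' : ℂ)) := by
      congr 1; funext x; ring_nf
    rw [this, integral_exp_mul_complex hcB]
    simp
  have hBup : ‖∫ t' in (0:ℝ)..t, Complex.exp (Complex.I * (t' : ℂ) * (B : ℂ))‖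
      ≤ |t| / 50 := by
    rw [hBval]
    have hnum : ‖Complex.exp (Complex.I * (B : ℂ) * (t : ℂ)) - 1‖ ≤ 2 := by
      have h1 : ‖Complex.exp (Complex.I * (B : ℂ) * (t : ℂ))‖ = 1 := by
        rw [Complex.norm_exp]
        simp
      calc ‖Complex.exp (Complex.I * (B : ℂ) * (t : ℂ)) - 1‖
          ≤ ‖Complex.exp (Complex.I * (B : ℂ) * (t : ℂ))‖ + ‖(1:ℂ)‖ :=
            norm_sub_le _ _
        _ = 2 := by rw [h1]; norm_num
    have hden : ‖Complex.I * (B : ℂ)‖ = |B| := by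
      simp [Complex.norm_real]
    rw [norm_div, hden]
    have h50 : 2 / |B| ≤ |t| / 50 := by
      rw [div_le_div_iff₀ hBpos (by norm_num)]
      have : 100 / |t| * |t| ≤ |B| * |t| :=
        mul_le_mul_of_nonneg_right hB (abs_nonneg _)
      rw [div_mul_cancel₀ _ (ne_of_gt htpos)] at this
      nlinarith
    calc ‖Complex.exp (Complex.I * (B : ℂ) * (t : ℂ)) - 1‖ / |B|
        ≤ 2 / |B| := by gcongr
      _ ≤ |t| / 50 := h50
  linarith
end
end

section
/- There exists a constant c > 0 such that for every real a ≥ 2, setting t := π/(2a), one has |∫_0^t a · sin((t−t′)a) · e^{−i t′ a²} dt′| ≥ c/a. (This oscillatory-integral lower bound is the core computation in the proof of Lemma 6.2 (iv), showing that the quadratic Duhamel term of the wave part cannot be bounded in H^l by ‖u_0‖_{H^s}² when l > s+1.) -/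
open intervalIntegral

noncomputable section

/-- Oscillatory-integral lower bound for the quadratic Duhamel term of the
wave part (core computation in the proof of Lemma 6.2 (iv)). -/
theorem wave_duhamel_lower_bound :
    ∃ c : ℝ, 0 < c ∧
      ∀ a : ℝ, 2 ≤ a →
        c / a ≤
          ‖∫ t' in (0:ℝ)..(Real.pi / (2 * a)),
            ((a * Real.sin ((Real.pi / (2 * a) - t') * a) : ℝ) : ℂ) *
              Complex.exp (-Complex.I * (t' : ℂ) * (a : ℂ) ^ 2)‖ := by
  refine ⟨2/3, by norm_num, fun a ha => ?_⟩
  have ha0 : (0:ℝ) < a := by linarith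
  set t : ℝ := Real.pi / (2 * a) with ht
  have hta : a * t = Real.pi / 2 := by
    rw [ht]; field_simp
  have hden : (1 : ℂ) - (a:ℂ)^2 ≠ 0 := by
    have h1 : (1 - a^2 : ℝ) ≠ 0 := by nlinarith
    have : ((1 - a^2 : ℝ) : ℂ) ≠ 0 := by exact_mod_cast h1
    simpa [Complex.ofReal_sub, Complex.ofReal_pow] using this
  set F : ℝ → ℂ := fun x => Complex.exp (-Complex.I * (x:ℂ) * (a:ℂ)^2) *
      ((Real.cos (a*(t-x)) : ℂ) - Complex.I * a * (Real.sin (a*(t-x)) : ℂ)) / (1 - (a:ℂ)^2)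
    with hF
  have hderiv : ∀ x ∈ Set.uIcc (0:ℝ) t,
      HasDerivAt F (((a * Real.sin ((t - x)*a) : ℝ) : ℂ) *
        Complex.exp (-Complex.I * (x:ℂ) * (a:ℂ)^2)) x := by
    intro x _
    have h1 : HasDerivAt (fun x:ℝ => a*(t-x)) (-a) x := by
      simpa using ((hasDerivAt_id x).const_sub t).const_mul a
    have hc : HasDerivAt (fun x:ℝ => ((Real.cos (a*(t-x)) : ℝ) : ℂ))
        ((-Real.sin (a*(t-x)) * (-a) : ℝ) : ℂ) x := (h1.cos).ofReal_comp
    have hs : HasDerivAt (fun x:ℝ => ((Real.sin (a*(t-x)) : ℝ) : ℂ))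
        ((Real.cos (a*(t-x)) * (-a) : ℝ) : ℂ) x := (h1.sin).ofReal_comp
    have hin : HasDerivAt (fun x:ℝ => -Complex.I * (x:ℂ) * (a:ℂ)^2)
        (-Complex.I * (a:ℂ)^2) x := by
      have := ((hasDerivAt_id x).ofReal_comp).const_mul (-Complex.I)
      have h2 := this.mul_const ((a:ℂ)^2)
      simpa [mul_assoc, mul_comm, mul_left_comm] using h2
    have he : HasDerivAt (fun x:ℝ => Complex.exp (-Complex.I * (x:ℂ) * (a:ℂ)^2))
        (Complex.exp (-Complex.I * (x:ℂ) * (a:ℂ)^2) * (-Complex.I * (a:ℂ)^2)) x := hin.cexp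
    have hg : HasDerivAt (fun x:ℝ => ((Real.cos (a*(t-x)) : ℝ) : ℂ)
          - Complex.I * a * ((Real.sin (a*(t-x)) : ℝ) : ℂ))
        (((-Real.sin (a*(t-x)) * (-a) : ℝ) : ℂ)
          - Complex.I * a * ((Real.cos (a*(t-x)) * (-a) : ℝ) : ℂ)) x :=
      hc.sub ((hs.const_mul (Complex.I * a)))
    have hprod := (he.mul hg).div_const (1 - (a:ℂ)^2)
    convert hprod using 1
    have hI : Complex.I * Complex.I = -1 := Complex.I_mul_I
    · rfl
    · rfl
    field_simp
    ring_nf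
    rw [Complex.I_sq]
    push_cast
    ring
  have hint : IntervalIntegrable (fun x : ℝ => ((a * Real.sin ((t - x)*a) : ℝ) : ℂ) *
      Complex.exp (-Complex.I * (x:ℂ) * (a:ℂ)^2)) MeasureTheory.volume 0 t := by
    apply Continuous.intervalIntegrable
    have c1 : Continuous fun x : ℝ => ((a * Real.sin ((t - x)*a) : ℝ) : ℂ) :=
      Complex.continuous_ofReal.comp
        (continuous_const.mul ((Real.continuous_sin.comp
          (((continuous_const.sub continuous_id).mul continuous_const)))))
    have c2 : Continuous fun x : ℝ => Complex.exp (-Complex.I * (x:ℂ) * (a:ℂ)^2) :=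
      Complex.continuous_exp.comp
        ((continuous_const.mul Complex.continuous_ofReal).mul continuous_const)
    exact c1.mul c2
  have hkey : (∫ t' in (0:ℝ)..t,
      ((a * Real.sin ((t - t')*a) : ℝ) : ℂ) *
        Complex.exp (-Complex.I * (t':ℂ) * (a:ℂ)^2)) = F t - F 0 :=
    intervalIntegral.integral_eq_sub_of_hasDerivAt hderiv hint
  rw [hkey]
  have hFt : F t = Complex.exp (-Complex.I * (t:ℂ) * (a:ℂ)^2) / (1 - (a:ℂ)^2) := by
    simp [hF]
  have hF0 : F 0 = (- (Complex.I * a)) / (1 - (a:ℂ)^2) := by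
    have hc0 : Real.cos (a*(t-0)) = 0 := by rw [sub_zero, hta]; exact Real.cos_pi_div_two
    have hs0 : Real.sin (a*(t-0)) = 1 := by rw [sub_zero, hta]; exact Real.sin_pi_div_two
    simp [hF, hc0, hs0]
    rw [← Complex.ofReal_mul, hta]
    push_cast
    rw [Complex.cos_pi_div_two, Complex.sin_pi_div_two]
    ring
  rw [hFt, hF0, div_sub_div_same]
  rw [norm_div]
  have hnum : a - 1 ≤ ‖Complex.exp (-Complex.I * (t:ℂ) * (a:ℂ)^2) - -(Complex.I * a)‖ := by
    set z := Complex.exp (-Complex.I * (t:ℂ) * (a:ℂ)^2) - -(Complex.I * a) with hz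
    have hexp : Complex.exp (-Complex.I * (t:ℂ) * (a:ℂ)^2)
        = Complex.exp (((-(t*a^2) : ℝ) : ℂ) * Complex.I) := by
      congr 1; push_cast; ring
    have him : z.im = -Real.sin (t * a^2) + a := by
      rw [hz, Complex.sub_im, hexp, Complex.exp_ofReal_mul_I_im, Real.sin_neg]
      simp [Complex.mul_im]
    have h1 : a - 1 ≤ |z.im| := by
      rw [him]
      have := Real.sin_le_one (t * a^2)
      rw [abs_of_nonneg (by linarith)]
      linarith
    calc a - 1 ≤ |z.im| := h1
      _ ≤ ‖z‖ := Complex.abs_im_le_norm z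
  have hden2 : ‖(1:ℂ) - (a:ℂ)^2‖ = a^2 - 1 := by
    have : (1:ℂ) - (a:ℂ)^2 = ((1 - a^2 : ℝ) : ℂ) := by push_cast; ring
    rw [this, Complex.norm_real, Real.norm_eq_abs, abs_of_nonpos (by nlinarith), neg_sub]
  rw [hden2]
  rw [div_le_div_iff₀ (by positivity) (by nlinarith)]
  have h3 : (a-1) * a ≤ ‖Complex.exp (-Complex.I * (t:ℂ) * (a:ℂ)^2) - -(Complex.I * a)‖ * a := by
    exact mul_le_mul_of_nonneg_right hnum (by linarith)
  nlinarith [hnum]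
end
end
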